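/- arXiv:2311.15501 — 6 statements merged into one kernel-verified Lean document; each statement's English description precedes it below -/
import Mathlib

section
/- If Γ is an unbalanced signed graph on n vertices containing no unbalanced signed complete graph on r+1 vertices as a subgraph, then the number of edges of Γ satisfies e(Γ) ≤ n(n-1)/2 - (n - r). -/
open Matrix BigOperators

/-- `A` is the adjacency matrix of a signed graph: symmetric, zero diagonal,
entries in `{0, 1, -1}`. -/
def IsSignedAdj {n : ℕ} (A : Matrix (Fin n) (Fin n) ℝ) : Prop :=
  (∀ i j, A i j = A j i) ∧ (∀ i, A i i = 0) ∧ (∀ i j, A i j = 0 ∨ A i j = 1 ∨ A i j = -1)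

/-- The underlying simple graph of the signed graph with adjacency matrix `A`. -/
def graphOf {n : ℕ} (A : Matrix (Fin n) (Fin n) ℝ) : SimpleGraph (Fin n) where
  Adj i j := i ≠ j ∧ A i j ≠ 0 ∧ A j i ≠ 0
  symm := by constructor; intro i j h; exact ⟨h.1.symm, h.2.2, h.2.1⟩
  loopless := by constructor; intro i h; exact h.1 rfl

/-- The sign of a walk: the product of the signs of its edges. -/
def walkSign {n : ℕ} (A : Matrix (Fin n) (Fin n) ℝ) {G : SimpleGraph (Fin n)}
    {u v : Fin n} (w : G.Walk u v) : ℝ :=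
  (w.darts.map fun d => A d.fst d.snd).prod

/-- A signed graph is unbalanced if it has a cycle with sign `-1`. -/
def IsUnbalanced {n : ℕ} (A : Matrix (Fin n) (Fin n) ℝ) : Prop :=
  ∃ (u : Fin n) (w : (graphOf A).Walk u u), w.IsCycle ∧ walkSign A w = -1

/-- Every cycle contained in `S` is positive. -/
def IsBalancedOn {n : ℕ} (A : Matrix (Fin n) (Fin n) ℝ) (S : Set (Fin n)) : Prop :=
  ∀ (u : Fin n) (w : (graphOf A).Walk u u), w.IsCycle → (∀ v ∈ w.support, v ∈ S) →
    walkSign A w = 1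

/-- `S` spans a complete subgraph. -/
def IsCompleteOn {n : ℕ} (A : Matrix (Fin n) (Fin n) ℝ) (S : Set (Fin n)) : Prop :=
  ∀ i ∈ S, ∀ j ∈ S, i ≠ j → A i j ≠ 0

/-- `S` spans an unbalanced complete subgraph. -/
def UnbalancedCompleteOn {n : ℕ} (A : Matrix (Fin n) (Fin n) ℝ) (S : Set (Fin n)) : Prop :=
  IsCompleteOn A S ∧ ∃ (u : Fin n) (w : (graphOf A).Walk u u), w.IsCycle ∧
    (∀ v ∈ w.support, v ∈ S) ∧ walkSign A w = -1

/-- The signed graph contains no unbalanced complete subgraph on `k` vertices. -/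
def KminusFree {n : ℕ} (A : Matrix (Fin n) (Fin n) ℝ) (k : ℕ) : Prop :=
  ¬ ∃ S : Finset (Fin n), S.card = k ∧ UnbalancedCompleteOn A ↑S

/-- The largest eigenvalue of `A`. -/
noncomputable def lam1 {n : ℕ} (A : Matrix (Fin n) (Fin n) ℝ) : ℝ :=
  sSup {μ : ℝ | ∃ x : Fin n → ℝ, x ≠ 0 ∧ A.mulVec x = μ • x}

/-- The signed graph `Γ_{1,r-2}`: vertices `1,…,n-1` form an all-positive complete graph,
vertex `0` is joined to vertex `1` by a negative edge and to vertices `2,…,r-1`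
by positive edges. -/
def GammaMat (n r : ℕ) : Matrix (Fin n) (Fin n) ℝ :=
  Matrix.of fun i j =>
    if i = j then 0
    else if i.val = 0 then (if j.val = 1 then -1 else if j.val < r then 1 else 0)
    else if j.val = 0 then (if i.val = 1 then -1 else if i.val < r then 1 else 0)
    else 1

namespace SG

variable {n : ℕ}

/-- Product of `A` along the path `a :: xs` ending at `b`. -/
def pprod (A : Matrix (Fin n) (Fin n) ℝ) : Fin n → List (Fin n) → Fin n → ℝ
  | a, [], b => A a b
  | a, x :: xs, b => A a x * pprod A x xs b

/-- Cyclic product of `A` along a list. -/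
def cprod (A : Matrix (Fin n) (Fin n) ℝ) : List (Fin n) → ℝ
  | [] => 1
  | a :: xs => pprod A a xs a

variable {A : Matrix (Fin n) (Fin n) ℝ}

theorem pprod_append (a c b : Fin n) (p q : List (Fin n)) :
    pprod A a (p ++ c :: q) b = pprod A a p c * pprod A c q b := by
  induction p generalizing a with
  | nil => simp [pprod]
  | cons x xs ih => simp [pprod, ih x, mul_assoc]

theorem pprod_trich (hA : IsSignedAdj A) (a b : Fin n) (xs : List (Fin n)) :
    pprod A a xs b = 0 ∨ pprod A a xs b = 1 ∨ pprod A a xs b = -1 := by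
  induction xs generalizing a with
  | nil => exact hA.2.2 a b
  | cons x xs ih =>
    rcases hA.2.2 a x with h | h | h <;> rcases ih x with h' | h' | h' <;>
      simp [pprod, h, h']

theorem cprod_trich (hA : IsSignedAdj A) (l : List (Fin n)) :
    cprod A l = 0 ∨ cprod A l = 1 ∨ cprod A l = -1 := by
  cases l with
  | nil => simp [cprod]
  | cons a xs => exact pprod_trich hA a a xs

theorem sq_one (hA : IsSignedAdj A) {x y : Fin n} (h : A x y ≠ 0) : A x y * A x y = 1 := by
  rcases hA.2.2 x y with h' | h' | h' <;> simp [h'] at h ⊢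

theorem neglist_three_le (hA : IsSignedAdj A) {l : List (Fin n)} (h : cprod A l = -1) :
    3 ≤ l.length := by
  match l with
  | [] => norm_num [cprod] at h
  | [a] => simp [cprod, pprod, hA.2.1] at h
  | [a, b] =>
    simp only [cprod, pprod] at h
    rcases hA.2.2 a b with h' | h' | h' <;> rw [hA.1 b a] at h <;> norm_num [h'] at h
  | a :: b :: c :: xs => simp

theorem walkSign_eq_pprod {G : SimpleGraph (Fin n)} {x y : Fin n}
    (p : G.Walk x y) (s : List (Fin n)) (hs : p.support = x :: (s ++ [y])) :
    walkSign A p = pprod A x s y := by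
  induction p generalizing s with
  | nil =>
    simp only [SimpleGraph.Walk.support_nil, List.cons.injEq, true_and] at hs
    exact absurd hs.symm (by simp)
  | @cons u v z h p' ih =>
    rw [SimpleGraph.Walk.support_cons] at hs
    have hps : p'.support = s ++ [z] := by exact (List.cons.injEq _ _ _ _).mp hs |>.2
    cases s with
    | nil =>
      have hv : v = z := by
        have := p'.support_eq_cons
        rw [hps] at this; simpa using this.symm
      have hlen : p'.length = 0 := by
        have := p'.length_support
        rw [hps] at this; simpa using this.symm
      have hd : p'.darts = [] := List.eq_nil_of_length_eq_zero (by rw [p'.length_darts, hlen])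
      subst hv
      simp [walkSign, SimpleGraph.Walk.darts_cons, hd, pprod]
    | cons w s' =>
      have hv : v = w := by
        have h2 := p'.support_eq_cons
        rw [hps] at h2
        injection h2 with h2 _
        exact h2.symm
      subst hv
      have := ih s' (by simpa using hps)
      simp only [walkSign, SimpleGraph.Walk.darts_cons, List.map_cons, List.prod_cons] at *
      rw [this, pprod]

theorem exists_neglist_of_cycle {u : Fin n} {G : SimpleGraph (Fin n)}
    {w : G.Walk u u} (hc : w.IsCycle) (hs : walkSign A w = -1) :
    ∃ l : List (Fin n), l.Nodup ∧ (∀ x ∈ l, x ∈ w.support) ∧ cprod A l = -1 := by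
  have htl : w.support.tail ≠ [] := by
    have h1 := w.length_support
    have h3 := hc.three_le_length
    intro h
    rw [w.support_eq_cons] at h1
    rw [h] at h1
    simp at h1
    exact hc.not_nil h1
  have hlast : w.support.tail.getLast htl = u := by
    rw [List.getLast_tail]
    exact w.getLast_support
  have hdec : w.support = u :: (w.support.tail.dropLast ++ [u]) := by
    conv_lhs => rw [w.support_eq_cons]
    congr 1
    conv_lhs => rw [← List.dropLast_append_getLast htl]
    rw [hlast]
  refine ⟨u :: w.support.tail.dropLast, ?_, ?_, ?_⟩
  · have hnd : w.support.tail.Nodup := hc.support_nodup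
    rw [← List.dropLast_append_getLast htl, hlast] at hnd
    rw [List.nodup_cons]
    constructor
    · exact fun hmem => (List.disjoint_of_nodup_append hnd) hmem (by simp)
    · exact (List.nodup_append.mp hnd).1
  · intro x hx
    rcases List.mem_cons.mp hx with rfl | hx
    · exact w.start_mem_support
    · rw [w.support_eq_cons]
      exact List.mem_cons_of_mem _ (List.dropLast_subset _ hx)
  · rw [cprod, ← walkSign_eq_pprod w _ hdec]; exact hs

theorem triangle_walk {a b c : Fin n} (hab : (graphOf A).Adj a b)
    (hbc : (graphOf A).Adj b c) (hca : (graphOf A).Adj c a) (hac : a ≠ c) :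
    ∃ w : (graphOf A).Walk a a, w.IsCycle ∧ (∀ v ∈ w.support, v = a ∨ v = b ∨ v = c) ∧
      walkSign A w = A a b * (A b c * A c a) := by
  refine ⟨.cons hab (.cons hbc (.cons hca .nil)), ?_, ?_, ?_⟩
  · rw [SimpleGraph.Walk.isCycle_def]
    rw [SimpleGraph.Walk.isTrail_def]
    refine ⟨?_, by simp, ?_⟩
    · simp [SimpleGraph.Walk.edges, Sym2.eq, Sym2.rel_iff', hab.ne, hbc.ne, hac,
        Ne.symm hab.ne, Ne.symm hbc.ne, Ne.symm hac]
    · simp [hab.ne, hbc.ne, hac, Ne.symm hab.ne, Ne.symm hbc.ne, Ne.symm hac, hca.ne]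
  · intro v hv
    simp [SimpleGraph.Walk.support_cons] at hv
    tauto
  · simp [walkSign]

theorem count_bound (A : Matrix (Fin n) (Fin n) ℝ) (r : ℕ) (M : Finset (Sym2 (Fin n)))
    (hM : ∀ e ∈ M, (¬ e.IsDiag) ∧ e ∉ (graphOf A).edgeSet)
    (hcard : n - r ≤ M.card) :
    (graphOf A).edgeSet.ncard ≤ n * (n - 1) / 2 - (n - r) := by
  classical
  rw [Set.ncard_eq_toFinset_card']
  have hMsub : M ⊆ (⊤ : SimpleGraph (Fin n)).edgeFinset := by
    intro e he
    rw [SimpleGraph.mem_edgeFinset, SimpleGraph.edgeSet_top]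
    exact (hM e he).1
  have hsub : (graphOf A).edgeSet.toFinset ⊆ (⊤ : SimpleGraph (Fin n)).edgeFinset \ M := by
    intro e he
    rw [Set.mem_toFinset] at he
    rw [Finset.mem_sdiff]
    refine ⟨?_, fun hm => (hM e hm).2 he⟩
    rw [SimpleGraph.mem_edgeFinset]
    exact SimpleGraph.edgeSet_mono le_top he
  calc (graphOf A).edgeSet.toFinset.card
      ≤ ((⊤ : SimpleGraph (Fin n)).edgeFinset \ M).card := Finset.card_le_card hsub
    _ = (⊤ : SimpleGraph (Fin n)).edgeFinset.card - M.card := Finset.card_sdiff_of_subset hMsub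
    _ ≤ n * (n - 1) / 2 - (n - r) := by
        rw [SimpleGraph.card_edgeFinset_top_eq_card_choose_two, Fintype.card_fin,
          Nat.choose_two_right]
        exact Nat.sub_le_sub_left hcard _

theorem exists_neg_triangle (hA : IsSignedAdj A) {S : Set (Fin n)}
    (hS : ∀ i ∈ S, ∀ j ∈ S, i ≠ j → A i j ≠ 0) :
    ∀ N (l : List (Fin n)), l.length ≤ N → l.Nodup → (∀ x ∈ l, x ∈ S) → cprod A l = -1 →
      ∃ a b c : Fin n, a ∈ S ∧ b ∈ S ∧ c ∈ S ∧ a ≠ b ∧ b ≠ c ∧ a ≠ c ∧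
        A a b * (A b c * A c a) = -1 := by
  intro N
  induction N with
  | zero =>
    intro l hlen hnd hmem hc
    have := neglist_three_le hA hc; omega
  | succ N ih =>
    intro l hlen hnd hmem hc
    have h3 := neglist_three_le hA hc
    rcases l with _ | ⟨a, _ | ⟨b, _ | ⟨c, rest⟩⟩⟩ <;> simp at h3
    have ha : a ∈ S := hmem a (by simp)
    have hb : b ∈ S := hmem b (by simp)
    have hcS : c ∈ S := hmem c (by simp)
    have hnd' := hnd
    simp only [List.nodup_cons, List.mem_cons, not_or] at hnd'
    obtain ⟨⟨hnab, hnac, -⟩, ⟨hnbc, -⟩, -⟩ := hnd'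
    cases rest with
    | nil =>
      refine ⟨a, b, c, ha, hb, hcS, hnab, hnbc, hnac, ?_⟩
      simpa [cprod, pprod] using hc
    | cons d rest' =>
      have hc' : A a b * (A b c * pprod A c (d :: rest') a) = -1 := by
        simpa [cprod, pprod] using hc
      have hne : A a b * (A b c * pprod A c (d :: rest') a) ≠ 0 := by
        rw [hc']; norm_num
      have hab0 : A a b ≠ 0 := fun h => hne (by rw [h]; ring)
      have hbc0 : A b c ≠ 0 := fun h => hne (by rw [h]; ring)
      have hac0 : A a c ≠ 0 := hS a ha c hcS hnac
      have hca0 : A c a ≠ 0 := by rw [hA.1 c a]; exact hac0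
      by_cases ht : A a b * (A b c * A c a) = -1
      · exact ⟨a, b, c, ha, hb, hcS, hnab, hnbc, hnac, ht⟩
      · have htr := cprod_trich hA [a, b, c]
        simp only [cprod, pprod] at htr
        have ht0 : A a b * (A b c * A c a) ≠ 0 :=
          mul_ne_zero hab0 (mul_ne_zero hbc0 hca0)
        have ht1 : A a b * (A b c * A c a) = 1 := by tauto
        have h2 : A c a * A a c = 1 := by rw [hA.1 c a]; exact sq_one hA hac0
        have key : A a b * A b c = A a c := by
          calc A a b * A b c = A a b * A b c * (A c a * A a c) := by rw [h2, mul_one]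
            _ = (A a b * (A b c * A c a)) * A a c := by ring
            _ = A a c := by rw [ht1, one_mul]
        have hc2 : cprod A (a :: c :: d :: rest') = -1 := by
          show A a c * pprod A c (d :: rest') a = -1
          rw [← key, mul_assoc]; exact hc'
        have hsub : (a :: c :: d :: rest').Sublist (a :: b :: c :: d :: rest') :=
          List.Sublist.cons₂ _ (List.sublist_cons_self _ _)
        exact ih (a :: c :: d :: rest') (by simp at hlen ⊢; omega) (hnd.sublist hsub)
          (fun x hx => hmem x (hsub.subset hx)) hc2

theorem cprod_chord (hA : IsSignedAdj A) (a c : Fin n) (p q : List (Fin n)) (hac : A a c ≠ 0) :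
    cprod A (a :: (p ++ [c])) * cprod A (a :: c :: q) = cprod A (a :: (p ++ c :: q)) := by
  have h1 : A c a * A a c = 1 := by rw [hA.1 c a]; exact sq_one hA hac
  show pprod A a (p ++ [c]) a * pprod A a (c :: q) a = pprod A a (p ++ c :: q) a
  have e1 : (p : List (Fin n)) ++ [c] = p ++ c :: [] := rfl
  rw [e1, pprod_append, pprod_append]
  show (pprod A a p c * A c a) * (A a c * pprod A c q a) = _
  calc (pprod A a p c * A c a) * (A a c * pprod A c q a)
      = (A c a * A a c) * (pprod A a p c * pprod A c q a) := by ring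
    _ = pprod A a p c * pprod A c q a := by rw [h1, one_mul]

theorem chord_zero (hA : IsSignedAdj A) {l : List (Fin n)} (hnd : l.Nodup)
    (hc : cprod A l = -1)
    (hmin : ∀ l' : List (Fin n), l'.Nodup → cprod A l' = -1 → l.length ≤ l'.length)
    {a c : Fin n} {p q : List (Fin n)} (hl : l = a :: (p ++ c :: q))
    (hp : p ≠ []) (hq : q ≠ []) : A a c = 0 := by
  by_contra hac
  have hsplit := cprod_chord hA a c p q hac
  rw [← hl, hc] at hsplit
  have hnd1 : (a :: (p ++ [c])).Nodup := by
    refine hnd.sublist ?_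
    rw [hl]
    exact List.Sublist.cons₂ _ (List.Sublist.append_left (List.Sublist.cons₂ c (List.nil_sublist q)) p)
  have hnd2 : (a :: c :: q).Nodup := by
    refine hnd.sublist ?_
    rw [hl]
    exact List.Sublist.cons₂ _ (List.sublist_append_right p (c :: q))
  have hlen : l.length = p.length + q.length + 2 := by rw [hl]; simp; omega
  have h1 := cprod_trich hA (a :: (p ++ [c]))
  have h2 := cprod_trich hA (a :: c :: q)
  have hqlen : 1 ≤ q.length := List.length_pos_iff.mpr hq
  have hplen : 1 ≤ p.length := List.length_pos_iff.mpr hp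
  rcases h1 with h1 | h1 | h1 <;> rcases h2 with h2 | h2 | h2 <;>
      rw [h1, h2] at hsplit <;> norm_num at hsplit
  · have := hmin _ hnd2 h2
    simp at this; omega
  · have := hmin _ hnd1 h1
    simp at this; omega

theorem missing_of_T (A : Matrix (Fin n) (Fin n) ℝ) (T : Finset (Fin n))
    (h : ∀ v : Fin n, v ∉ T → ∃ u ∈ T, A v u = 0) :
    ∃ M : Finset (Sym2 (Fin n)), M.card = n - T.card ∧
      ∀ e ∈ M, ((¬ e.IsDiag) ∧ e ∉ (graphOf A).edgeSet) ∧
        ∃ v u : Fin n, e = s(v, u) ∧ v ∉ T ∧ u ∈ T := by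
  classical
  choose f hfT hf0 using h
  let g : Fin n → Sym2 (Fin n) := fun v => if hv : v ∉ T then s(v, f v hv) else s(v, v)
  refine ⟨Tᶜ.image g, ?_, ?_⟩
  · rw [Finset.card_image_of_injOn, Finset.card_compl, Fintype.card_fin]
    intro v hv v' hv' hgv
    rw [Finset.mem_coe, Finset.mem_compl] at hv hv'
    simp only [g, dif_pos hv, dif_pos hv'] at hgv
    rw [Sym2.eq_iff] at hgv
    rcases hgv with ⟨h1, -⟩ | ⟨h1, h2⟩
    · exact h1
    · exact absurd (h1 ▸ hfT v' hv') hv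
  · intro e he
    rw [Finset.mem_image] at he
    obtain ⟨v, hv, rfl⟩ := he
    rw [Finset.mem_compl] at hv
    refine ⟨⟨?_, ?_⟩, v, f v hv, by simp only [g, dif_pos hv], hv, hfT v hv⟩
    · simp only [g, dif_pos hv, Sym2.mk_isDiag_iff]
      exact fun h' => hv (h' ▸ hfT v hv)
    · simp only [g, dif_pos hv, SimpleGraph.mem_edgeSet]
      exact fun hadj => hadj.2.1 (hf0 v hv)

end SG


/-- If `Γ` is an unbalanced signed graph on `n` vertices containing no unbalanced
complete subgraph on `r+1` vertices, then `e(Γ) ≤ n(n-1)/2 - (n-r)`. -/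
theorem stmt0 {n r : ℕ} (hr : 3 ≤ r) (A : Matrix (Fin n) (Fin n) ℝ)
    (hA : IsSignedAdj A) (hunb : IsUnbalanced A) (hfree : KminusFree A (r + 1)) :
    (graphOf A).edgeSet.ncard ≤ n * (n - 1) / 2 - (n - r) := by
  classical
  have hsym := hA.1
  obtain ⟨u0, w0, hw0, hs0⟩ := hunb
  obtain ⟨l0, hl0nd, -, hl0c⟩ := SG.exists_neglist_of_cycle hw0 hs0
  have hex : ∃ k, ∃ l : List (Fin n), l.Nodup ∧ SG.cprod A l = -1 ∧ l.length = k :=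
    ⟨_, l0, hl0nd, hl0c, rfl⟩
  obtain ⟨l, hlnd, hlc, hlk⟩ := Nat.find_spec hex
  have hmin : ∀ l' : List (Fin n), l'.Nodup → SG.cprod A l' = -1 → l.length ≤ l'.length := by
    intro l' h1 h2
    rw [hlk]
    exact Nat.find_le ⟨l', h1, h2, rfl⟩
  have h3 : 3 ≤ l.length := SG.neglist_three_le hA hlc
  rcases eq_or_lt_of_le h3 with hl3 | hl4
  · -- minimal negative cycle is a triangle
    obtain ⟨a, b, c, rfl⟩ : ∃ a b c : Fin n, l = [a, b, c] :=
      List.length_eq_three.mp hl3.symm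
    have hprod : A a b * (A b c * A c a) = -1 := by simpa [SG.cprod, SG.pprod] using hlc
    have hne0 : A a b * (A b c * A c a) ≠ 0 := by rw [hprod]; norm_num
    have hab0 : A a b ≠ 0 := fun h => hne0 (by rw [h]; ring)
    have hbc0 : A b c ≠ 0 := fun h => hne0 (by rw [h]; ring)
    have hca0 : A c a ≠ 0 := fun h => hne0 (by rw [h]; ring)
    have hnd' := hlnd
    simp only [List.nodup_cons, List.mem_cons, not_or, List.not_mem_nil,
      List.mem_singleton, List.nodup_nil, and_true, not_false_iff] at hnd'
    obtain ⟨⟨hnab, hnac⟩, hnbc⟩ := hnd'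
    have hadjab : (graphOf A).Adj a b := ⟨hnab, hab0, by rw [hsym b a]; exact hab0⟩
    have hadjbc : (graphOf A).Adj b c := ⟨hnbc, hbc0, by rw [hsym c b]; exact hbc0⟩
    have hadjca : (graphOf A).Adj c a := ⟨Ne.symm hnac, hca0, by rw [hsym a c]; exact hca0⟩
    obtain ⟨w, hwc, hwsup, hwsign⟩ := SG.triangle_walk hadjab hadjbc hadjca hnac
    have hUC : ∀ T : Finset (Fin n), a ∈ T → b ∈ T → c ∈ T → IsCompleteOn A ↑T →
        UnbalancedCompleteOn A ↑T := by
      intro T haT hbT hcT hcomp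
      refine ⟨hcomp, a, w, hwc, fun v hv => ?_, by rw [hwsign]; exact hprod⟩
      rcases hwsup v hv with rfl | rfl | rfl <;> exact Finset.mem_coe.mpr (by assumption)
    have hcomp0 : IsCompleteOn A (↑({a, b, c} : Finset (Fin n))) := by
      intro i hi j hj hij
      simp only [Finset.coe_insert, Set.mem_insert_iff, Finset.coe_singleton,
        Set.mem_singleton_iff] at hi hj
      rcases hi with rfl | rfl | rfl <;> rcases hj with rfl | rfl | rfl <;>
        first
          | exact absurd rfl hij
          | assumption
          | (rw [hsym]; assumption)
    have hFne : {T : Finset (Fin n) | UnbalancedCompleteOn A ↑T}.Nonempty :=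
      ⟨{a, b, c}, hUC _ (by simp) (by simp) (by simp) hcomp0⟩
    obtain ⟨T, hT, hTmax⟩ := Set.Finite.exists_maximalFor Finset.card
      {T : Finset (Fin n) | UnbalancedCompleteOn A ↑T} (Set.toFinite _) hFne
    have hT : UnbalancedCompleteOn A ↑T := hT
    have hTr : T.card ≤ r := by
      by_contra hgt
      push_neg at hgt
      obtain ⟨u1, w1, hw1, hw1sup, hw1sign⟩ := hT.2
      obtain ⟨l1, h1nd, h1mem, h1c⟩ := SG.exists_neglist_of_cycle hw1 hw1sign
      obtain ⟨a', b', c', ha', hb', hc', hab', hbc', hac', hprod'⟩ :=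
        SG.exists_neg_triangle hA hT.1 l1.length l1 le_rfl h1nd
          (fun x hx => hw1sup x (h1mem x hx)) h1c
      have hsub3 : ({a', b', c'} : Finset (Fin n)) ⊆ T := by
        intro x hx
        simp only [Finset.mem_insert, Finset.mem_singleton] at hx
        rcases hx with rfl | rfl | rfl
        · exact Finset.mem_coe.mp ha'
        · exact Finset.mem_coe.mp hb'
        · exact Finset.mem_coe.mp hc'
      have hc3 : ({a', b', c'} : Finset (Fin n)).card ≤ r + 1 := by
        have h1 : ({a', b', c'} : Finset (Fin n)).card ≤ 3 := by
          apply le_trans (Finset.card_insert_le _ _)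
          have := Finset.card_insert_le b' ({c'} : Finset (Fin n))
          simp at this ⊢
          omega
        omega
      obtain ⟨S, hS1, hS2, hS3⟩ := Finset.exists_subsuperset_card_eq hsub3 hc3 hgt
      have hne0' : A a' b' * (A b' c' * A c' a') ≠ 0 := by rw [hprod']; norm_num
      have hab0' : A a' b' ≠ 0 := fun h => hne0' (by rw [h]; ring)
      have hbc0' : A b' c' ≠ 0 := fun h => hne0' (by rw [h]; ring)
      have hca0' : A c' a' ≠ 0 := fun h => hne0' (by rw [h]; ring)
      have hadjab' : (graphOf A).Adj a' b' := ⟨hab', hab0', by rw [hsym b' a']; exact hab0'⟩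
      have hadjbc' : (graphOf A).Adj b' c' := ⟨hbc', hbc0', by rw [hsym c' b']; exact hbc0'⟩
      have hadjca' : (graphOf A).Adj c' a' := ⟨Ne.symm hac', hca0', by rw [hsym a' c']; exact hca0'⟩
      obtain ⟨w', hwc', hwsup', hwsign'⟩ := SG.triangle_walk hadjab' hadjbc' hadjca' hac'
      refine hfree ⟨S, hS3, fun i hi j hj hij => hT.1 i (Finset.coe_subset.mpr hS2 hi) j
        (Finset.coe_subset.mpr hS2 hj) hij, a', w', hwc', fun v hv => ?_,
        by rw [hwsign']; exact hprod'⟩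
      rcases hwsup' v hv with rfl | rfl | rfl <;>
        exact Finset.mem_coe.mpr (hS1 (by simp))
    have hext : ∀ v : Fin n, v ∉ T → ∃ u ∈ T, A v u = 0 := by
      intro v hv
      by_contra hno
      push_neg at hno
      have hcomp' : IsCompleteOn A ↑(insert v T) := by
        intro i hi j hj hij
        simp only [Finset.coe_insert, Set.mem_insert_iff] at hi hj
        rcases hi with rfl | hi
        · rcases hj with rfl | hj
          · exact absurd rfl hij
          · exact hno j (Finset.mem_coe.mp hj)
        · rcases hj with rfl | hj
          · rw [hsym i j]; exact hno i (Finset.mem_coe.mp hi)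
          · exact hT.1 i hi j hj hij
      have hmem' : UnbalancedCompleteOn A ↑(insert v T) := by
        obtain ⟨u1, w1, hw1, hw1sup, hw1sign⟩ := hT.2
        exact ⟨hcomp', u1, w1, hw1, fun x hx => by
          simp only [Finset.coe_insert, Set.mem_insert_iff]
          exact Or.inr (hw1sup x hx), hw1sign⟩
      have hle := hTmax hmem' (Finset.card_le_card (Finset.subset_insert v T))
      rw [Finset.card_insert_of_notMem hv] at hle
      omega
    obtain ⟨M, hMcard, hMprop⟩ := SG.missing_of_T A T hext
    refine SG.count_bound A r M (fun e he => (hMprop e he).1) ?_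
    rw [hMcard]
    exact Nat.sub_le_sub_left hTr n

  · -- minimal negative cycle has length ≥ 4
    obtain ⟨a, b, c, d, rest, rfl⟩ : ∃ a b c d rest, l = a :: b :: c :: d :: rest := by
      rcases l with _ | ⟨a, _ | ⟨b, _ | ⟨c, _ | ⟨d, t⟩⟩⟩⟩ <;>
        first
          | exact ⟨_, _, _, _, _, rfl⟩
          | (exfalso; simp at hl4)
    have hnd' := hlnd
    simp only [List.nodup_cons, List.mem_cons, not_or] at hnd'
    obtain ⟨⟨hnab, hnac, hnad, hnar⟩, ⟨hnbc, hnbd, hnbr⟩, ⟨hncd, hncr⟩, hndr, hrnd⟩ := hnd'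
    have hc' : A a b * (A b c * (A c d * SG.pprod A d rest a)) = -1 := by
      simpa [SG.cprod, SG.pprod] using hlc
    have hcne : A a b * (A b c * (A c d * SG.pprod A d rest a)) ≠ 0 := by rw [hc']; norm_num
    have hab0 : A a b ≠ 0 := fun h => hcne (by rw [h]; ring)
    have hbc0 : A b c ≠ 0 := fun h => hcne (by rw [h]; ring)
    have hcd0 : A c d ≠ 0 := fun h => hcne (by rw [h]; ring)
    have hmin3 : ∀ x y z : Fin n, x ≠ y → x ≠ z → y ≠ z → SG.cprod A [x, y, z] ≠ -1 := by
      intro x y z h1 h2 h3 hcp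
      have := hmin [x, y, z] (by simp [h1, h2, h3]) hcp
      simp only [List.length_cons, List.length_nil] at this
      omega
    have hout : ∀ v : Fin n, v ∉ (a :: b :: c :: d :: rest).toFinset →
        ∃ u ∈ (a :: b :: c :: d :: rest).toFinset, A v u = 0 := by
      intro v hv'
      have hv : v ∉ (a :: b :: c :: d :: rest) := fun h => hv' (List.mem_toFinset.mpr h)
      by_contra hno
      push_neg at hno
      have hvx : ∀ u, u ∈ (a :: b :: c :: d :: rest) → A v u ≠ 0 :=
        fun u hu => hno u (List.mem_toFinset.mpr hu)
      have hva : A v a ≠ 0 := hvx a (by simp)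
      have hvb : A v b ≠ 0 := hvx b (by simp)
      have hvc : A v c ≠ 0 := hvx c (by simp)
      have hvd : A v d ≠ 0 := hvx d (by simp)
      have hvne : ∀ u, u ∈ (a :: b :: c :: d :: rest) → v ≠ u := fun u hu h => hv (h ▸ hu)
      have hvrest : v ∉ rest := fun hmm => hv (by simp [hmm])
      have t1 : A v a * (A a b * A b v) = 1 := by
        have htr := SG.cprod_trich hA [v, a, b]
        have hne : SG.cprod A [v, a, b] ≠ 0 := by
          simp only [SG.cprod, SG.pprod]
          exact mul_ne_zero hva (mul_ne_zero hab0 (by rw [hsym b v]; exact hvb))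
        have hn1 : SG.cprod A [v, a, b] ≠ -1 :=
          hmin3 v a b (hvne a (by simp)) (hvne b (by simp)) hnab
        have h1 : SG.cprod A [v, a, b] = 1 := by tauto
        simpa [SG.cprod, SG.pprod] using h1
      have t2 : A v b * (A b c * A c v) = 1 := by
        have htr := SG.cprod_trich hA [v, b, c]
        have hne : SG.cprod A [v, b, c] ≠ 0 := by
          simp only [SG.cprod, SG.pprod]
          exact mul_ne_zero hvb (mul_ne_zero hbc0 (by rw [hsym c v]; exact hvc))
        have hn1 : SG.cprod A [v, b, c] ≠ -1 :=
          hmin3 v b c (hvne b (by simp)) (hvne c (by simp)) hnbc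
        have h1 : SG.cprod A [v, b, c] = 1 := by tauto
        simpa [SG.cprod, SG.pprod] using h1
      have e1 : A v a * A a b = A v b := by
        have hs := SG.sq_one hA hvb
        have hbv : A b v = A v b := hsym b v
        calc A v a * A a b = A v a * A a b * (A v b * A v b) := by rw [hs, mul_one]
          _ = (A v a * (A a b * A b v)) * A v b := by rw [hbv]; ring
          _ = A v b := by rw [t1, one_mul]
      have e2 : A v b * A b c = A v c := by
        have hs := SG.sq_one hA hvc
        have hcv : A c v = A v c := hsym c v
        calc A v b * A b c = A v b * A b c * (A v c * A v c) := by rw [hs, mul_one]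
          _ = (A v b * (A b c * A c v)) * A v c := by rw [hcv]; ring
          _ = A v c := by rw [t2, one_mul]
      have key : A a v * A v c = A a b * A b c := by
        have hs := SG.sq_one hA hva
        have hav : A a v = A v a := hsym a v
        calc A a v * A v c = A v a * (A v b * A b c) := by rw [hav, ← e2]
          _ = A v a * ((A v a * A a b) * A b c) := by rw [e1]
          _ = (A v a * A v a) * (A a b * A b c) := by ring
          _ = A a b * A b c := by rw [hs, one_mul]
      have hmneg : A a v * (A v c * (A c d * SG.pprod A d rest a)) = -1 := by
        calc A a v * (A v c * (A c d * SG.pprod A d rest a))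
            = (A a v * A v c) * (A c d * SG.pprod A d rest a) := by ring
          _ = (A a b * A b c) * (A c d * SG.pprod A d rest a) := by rw [key]
          _ = -1 := by rw [← hc']; ring
      have hvd2 : A d v * A v d = 1 := by rw [hsym d v]; exact SG.sq_one hA hvd
      have hsplit : SG.cprod A [v, c, d] * SG.cprod A (a :: v :: d :: rest) = -1 := by
        simp only [SG.cprod, SG.pprod]
        calc (A v c * (A c d * A d v)) * (A a v * (A v d * SG.pprod A d rest a))
            = (A d v * A v d) * (A a v * (A v c * (A c d * SG.pprod A d rest a))) := by ring
          _ = -1 := by rw [hvd2, one_mul, hmneg]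
      have hnd2 : (a :: v :: d :: rest).Nodup := by
        simp only [List.nodup_cons, List.mem_cons, not_or]
        exact ⟨⟨Ne.symm (hvne a (by simp)), hnad, hnar⟩, ⟨hvne d (by simp), hvrest⟩, hndr, hrnd⟩
      have h1 := SG.cprod_trich hA [v, c, d]
      have h2 := SG.cprod_trich hA (a :: v :: d :: rest)
      rcases h1 with h1 | h1 | h1 <;> rcases h2 with h2 | h2 | h2 <;>
        rw [h1, h2] at hsplit <;> norm_num at hsplit
      · have := hmin _ hnd2 h2
        simp only [List.length_cons] at this
        omega
      · exact hmin3 v c d (hvne c (by simp)) (hvne d (by simp)) hncd h1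
    obtain ⟨y, m', hmy⟩ : ∃ y m', (c :: d :: rest : List (Fin n)) = m' ++ [y] :=
      ⟨_, _, (List.dropLast_append_getLast (by simp : (c :: d :: rest : List (Fin n)) ≠ [])).symm⟩
    have hm'len : m'.length = rest.length + 1 := by
      have := congrArg List.length hmy
      simp at this
      omega
    have hcdr_nd : (c :: d :: rest).Nodup := by
      simp only [List.nodup_cons, List.mem_cons, not_or]
      exact ⟨⟨hncd, hncr⟩, hndr, hrnd⟩
    have hm'nd : m'.Nodup := by
      rw [hmy] at hcdr_nd
      exact (List.nodup_append.mp hcdr_nd).1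
    have ham' : a ∉ m' := by
      intro h
      have : a ∈ (c :: d :: rest : List (Fin n)) := by rw [hmy]; exact List.mem_append_left _ h
      simp only [List.mem_cons] at this
      tauto
    have hchord : ∀ x ∈ m', A a x = 0 := by
      intro x hx
      obtain ⟨p, q, hpq⟩ := List.append_of_mem hx
      refine SG.chord_zero hA hlnd hlc hmin (a := a) (c := x)
        (p := b :: p) (q := q ++ [y]) ?_ (by simp) (by simp)
      rw [show (a :: b :: c :: d :: rest : List (Fin n)) = a :: b :: (c :: d :: rest) from rfl,
        hmy, hpq]
      simp
    obtain ⟨Mo, hMocard, hMoprop⟩ := SG.missing_of_T A (a :: b :: c :: d :: rest).toFinset hout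
    have hTcard : (a :: b :: c :: d :: rest).toFinset.card = rest.length + 4 := by
      rw [List.toFinset_card_of_nodup hlnd]
      simp
    have hLn : rest.length + 4 ≤ n := by
      rw [← hTcard]
      calc (a :: b :: c :: d :: rest).toFinset.card ≤ Finset.univ.card := Finset.card_le_univ _
        _ = n := by simp
    have hMicard : (m'.toFinset.image (fun x => s(a, x))).card = rest.length + 1 := by
      rw [Finset.card_image_of_injOn, List.toFinset_card_of_nodup hm'nd, hm'len]
      intro x hx x' hx' hxx
      rw [Sym2.eq_iff] at hxx
      rcases hxx with ⟨-, h⟩ | ⟨h1, h2⟩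
      · exact h
      · exact absurd (h2 ▸ (Finset.mem_coe.mp hx : x ∈ m'.toFinset)) (by
          rw [List.mem_toFinset]
          intro hh
          exact ham' hh)
    have hdisj : Disjoint Mo (m'.toFinset.image (fun x => s(a, x))) := by
      rw [Finset.disjoint_left]
      intro e heo hei
      obtain ⟨-, v, u, rfl, hvT, -⟩ := hMoprop e heo
      obtain ⟨x, hx, hex⟩ := Finset.mem_image.mp hei
      rw [List.mem_toFinset] at hx
      have hxT : x ∈ (a :: b :: c :: d :: rest).toFinset := by
        rw [List.mem_toFinset, show (a :: b :: c :: d :: rest : List (Fin n))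
          = a :: b :: (c :: d :: rest) from rfl, hmy]
        simp only [List.mem_cons, List.mem_append]
        tauto
      have haT : a ∈ (a :: b :: c :: d :: rest).toFinset := by simp
      rw [Sym2.eq_iff] at hex
      rcases hex with ⟨h1, -⟩ | ⟨h1, h2⟩
      · exact hvT (h1 ▸ haT)
      · exact hvT (h2 ▸ hxT)
    refine SG.count_bound A r (Mo ∪ m'.toFinset.image (fun x => s(a, x))) ?_ ?_
    · intro e he
      rcases Finset.mem_union.mp he with he | he
      · exact (hMoprop e he).1
      · obtain ⟨x, hx, rfl⟩ := Finset.mem_image.mp he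
        rw [List.mem_toFinset] at hx
        constructor
        · rw [Sym2.mk_isDiag_iff]
          exact fun h => ham' (h ▸ hx)
        · rw [SimpleGraph.mem_edgeSet]
          exact fun hadj => hadj.2.1 (hchord x hx)
    · rw [Finset.card_union_of_disjoint hdisj, hMocard, hMicard, hTcard]
      omega
end

section
/- The signed graph Γ_{1,r-2} on n vertices, obtained from an all-positive complete graph K_{n-1} by adding a new vertex joined by one negative edge and r-2 positive edges, has exactly n(n-1)/2 - (n - r) edges, is unbalanced, and contains no unbalanced signed complete subgraph on r+1 vertices. -/
open Matrix BigOperators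

lemma gz {n r : ℕ} (hr : 3 ≤ r) (i j : Fin n) :
    GammaMat n r i j = 0 ↔ (i.val = j.val ∨ (i.val = 0 ∧ r ≤ j.val) ∨ (j.val = 0 ∧ r ≤ i.val)) := by
  unfold GammaMat
  simp only [Matrix.of_apply, show (i = j) ↔ (i.val = j.val) from Fin.ext_iff]
  split_ifs <;> norm_num <;> omega

lemma gadj {n r : ℕ} (hr : 3 ≤ r) (i j : Fin n) :
    (graphOf (GammaMat n r)).Adj i j ↔
      i.val ≠ j.val ∧ ¬(i.val = 0 ∧ r ≤ j.val) ∧ ¬(j.val = 0 ∧ r ≤ i.val) := by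
  show (i ≠ j ∧ _ ∧ _) ↔ _
  simp only [ne_eq, gz hr, show (i = j) ↔ (i.val = j.val) from Fin.ext_iff]
  tauto

lemma unb {n r : ℕ} (hr : 3 ≤ r) (hrn : r ≤ n) : ∃ (u : Fin n) (w : (graphOf (GammaMat n r)).Walk u u),
    w.IsCycle ∧ walkSign (GammaMat n r) w = -1 := by
  have hn : 3 ≤ n := hr.trans hrn
  set z : Fin n := ⟨0, by omega⟩
  set o : Fin n := ⟨1, by omega⟩
  set t : Fin n := ⟨2, by omega⟩
  have h01 : (graphOf (GammaMat n r)).Adj z o := by rw [gadj hr]; simp [z, o]; omega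
  have h12 : (graphOf (GammaMat n r)).Adj o t := by rw [gadj hr]; simp [o, t]
  have h20 : (graphOf (GammaMat n r)).Adj t z := by rw [gadj hr]; simp [t, z]; omega
  refine ⟨z, .cons h01 (.cons h12 (.cons h20 .nil)), ?_, ?_⟩
  · simp [SimpleGraph.Walk.isCycle_def, SimpleGraph.Walk.isTrail_def, Sym2.eq_iff,
      Fin.ext_iff, z, o, t]
  · simp only [walkSign, SimpleGraph.Walk.darts_cons, SimpleGraph.Walk.darts_nil,
      List.map_cons, List.map_nil, List.prod_cons, List.prod_nil]
    have h2r : 2 < r := by omega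
    simp [GammaMat, Fin.ext_iff, z, o, t, h2r]

lemma kfree {n r : ℕ} (hr : 3 ≤ r) (hrn : r ≤ n) :
    ¬ ∃ S : Finset (Fin n), S.card = r + 1 ∧ UnbalancedCompleteOn (GammaMat n r) ↑S := by
  rintro ⟨S, hcard, hcomp, u, w, hcyc, hsupp, hsign⟩
  by_cases hz : ∃ z ∈ S, z.val = 0
  · -- vertex 0 in S forces all of S inside {j | j.val < r}, card ≤ r < r+1
    obtain ⟨z, hzS, hz0⟩ := hz
    have hsub : S ⊆ Finset.univ.filter (fun j : Fin n => j.val < r) := by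
      intro j hjS
      simp only [Finset.mem_filter, Finset.mem_univ, true_and]
      by_cases hjz : j = z
      · subst hjz; omega
      · have := hcomp z hzS j hjS (fun h => hjz h.symm)
        rw [ne_eq, gz hr] at this
        push_neg at this
        omega
    have hcle : S.card ≤ r := by
      refine le_trans (Finset.card_le_card hsub) ?_
      have : Finset.univ.filter (fun j : Fin n => j.val < r) =
          Finset.univ.map (Fin.castLEEmb hrn) := by
        ext j
        simp only [Finset.mem_filter, Finset.mem_univ, true_and, Finset.mem_map,
          Fin.castLEEmb_apply]
        constructor
        · intro h; exact ⟨⟨j.val, h⟩, rfl⟩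
        · rintro ⟨k, rfl⟩; exact k.isLt
      rw [this, Finset.card_map, Finset.card_univ, Fintype.card_fin]
    omega
  · -- no vertex 0 : all darts have sign 1
    push_neg at hz
    have h1 : ∀ d ∈ w.darts, GammaMat n r d.fst d.snd = 1 := by
      intro d hd
      have hf := hz _ (hsupp _ (w.dart_fst_mem_support_of_mem_darts hd))
      have hs := hz _ (hsupp _ (w.dart_snd_mem_support_of_mem_darts hd))
      have hadj : (graphOf (GammaMat n r)).Adj d.fst d.snd := d.adj
      rw [gadj hr] at hadj
      unfold GammaMat
      simp only [Matrix.of_apply, show (d.fst = d.snd) ↔ (d.fst.val = d.snd.val) from Fin.ext_iff]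
      rw [if_neg hadj.1, if_neg hf, if_neg hs]
    have : walkSign (GammaMat n r) w = 1 := by
      unfold walkSign
      apply List.prod_eq_one
      intro x hx
      obtain ⟨d, hd, rfl⟩ := List.mem_map.mp hx
      exact h1 d hd
    rw [this] at hsign; norm_num at hsign

lemma cfilt {n r : ℕ} (hrn : r ≤ n) :
    (Finset.univ.filter (fun j : Fin n => j.val < r)).card = r := by
  have : Finset.univ.filter (fun j : Fin n => j.val < r) =
      Finset.univ.map (Fin.castLEEmb hrn) := by
    ext j
    simp only [Finset.mem_filter, Finset.mem_univ, true_and, Finset.mem_map,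
      Fin.castLEEmb_apply]
    constructor
    · intro h; exact ⟨⟨j.val, h⟩, rfl⟩
    · rintro ⟨k, rfl⟩; exact k.isLt
  rw [this, Finset.card_map, Finset.card_univ, Fintype.card_fin]

lemma ecount {n r : ℕ} (hr : 3 ≤ r) (hrn : r ≤ n) :
    (graphOf (GammaMat n r)).edgeSet.ncard = n * (n - 1) / 2 - (n - r) := by
  classical
  have hn : 3 ≤ n := le_trans hr hrn
  have hz : (0 : ℕ) < n := by omega
  set z : Fin n := ⟨0, hz⟩ with hzdef
  have hz0 : z.val = 0 := rfl
  set G := graphOf (GammaMat n r) with hG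
  set T : Finset (Sym2 (Fin n)) :=
    (Finset.univ.filter (fun j : Fin n => r ≤ j.val)).image (fun j => s(z, j)) with hT
  have hTcard : T.card = n - r := by
    rw [hT, Finset.card_image_of_injOn]
    · have hc := Finset.card_filter_add_card_filter_not
        (s := (Finset.univ : Finset (Fin n))) (p := fun j : Fin n => j.val < r)
      rw [cfilt hrn, Finset.card_univ, Fintype.card_fin] at hc
      have : Finset.univ.filter (fun j : Fin n => r ≤ j.val) =
          Finset.univ.filter (fun j : Fin n => ¬ j.val < r) := by
        apply Finset.filter_congr; intro x _; simp [not_lt]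
      rw [this]; omega
    · intro a ha b hb hab
      simp only [Finset.coe_filter, Set.mem_setOf_eq, Finset.mem_univ, true_and] at ha hb
      rw [Sym2.eq_iff] at hab
      rcases hab with ⟨-, h⟩ | ⟨h1, h2⟩
      · exact h
      · exfalso; rw [← h1] at hb; omega
  have hsub : G.edgeFinset ⊆ (⊤ : SimpleGraph (Fin n)).edgeFinset :=
    SimpleGraph.edgeFinset_mono le_top
  have hdiff : (⊤ : SimpleGraph (Fin n)).edgeFinset \ G.edgeFinset = T := by
    ext e
    induction e using Sym2.ind with
    | _ i j =>
      simp only [Finset.mem_sdiff, SimpleGraph.mem_edgeFinset, SimpleGraph.mem_edgeSet,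
        SimpleGraph.top_adj, hT, Finset.mem_image, Finset.mem_filter, Finset.mem_univ, true_and,
        hG, gadj hr, Sym2.eq_iff, ne_eq, Fin.ext_iff, hz0]
      constructor
      · rintro ⟨hne, hnadj⟩
        have hd : (i.val = 0 ∧ r ≤ j.val) ∨ (j.val = 0 ∧ r ≤ i.val) := by tauto
        rcases hd with ⟨h0, hrj⟩ | ⟨h0, hri⟩
        · exact ⟨j, hrj, Or.inl ⟨h0.symm, rfl⟩⟩
        · exact ⟨i, hri, Or.inr ⟨h0.symm, rfl⟩⟩
      · rintro ⟨k, hk, ⟨h1, h2⟩ | ⟨h1, h2⟩⟩ <;>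
          constructor <;> omega
  have htop : (⊤ : SimpleGraph (Fin n)).edgeFinset.card = n * (n - 1) / 2 := by
    rw [SimpleGraph.card_edgeFinset_top_eq_card_choose_two, Fintype.card_fin,
      Nat.choose_two_right]
  have hsd := Finset.card_sdiff_of_subset hsub
  rw [hdiff, hTcard, htop] at hsd
  have hle : G.edgeFinset.card ≤ n * (n - 1) / 2 := htop ▸ Finset.card_le_card hsub
  have hnc : G.edgeSet.ncard = G.edgeFinset.card := by
    rw [Set.ncard_eq_toFinset_card']
    congr!
  rw [hnc]; omega

/-- `Γ_{1,r-2}` has exactly `n(n-1)/2 - (n-r)` edges, is unbalanced, and contains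
no unbalanced complete subgraph on `r+1` vertices. -/
theorem stmt1 {n r : ℕ} (hr : 3 ≤ r) (hrn : r ≤ n) :
    (graphOf (GammaMat n r)).edgeSet.ncard = n * (n - 1) / 2 - (n - r) ∧
    IsUnbalanced (GammaMat n r) ∧ KminusFree (GammaMat n r) (r + 1) :=
  ⟨ecount hr hrn, unb hr hrn, kfree hr hrn⟩
end

section
/- For any non-empty signed graph Γ on n vertices, the largest eigenvalue satisfies λ_1(Γ) ≤ n - 1, with equality if and only if Γ is balanced and complete. -/
open Matrix BigOperators

lemma abs_le_one {n : ℕ} {A : Matrix (Fin n) (Fin n) ℝ} (hA : IsSignedAdj A) (i j : Fin n) :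
    |A i j| ≤ 1 := by
  rcases hA.2.2 i j with h | h | h <;> rw [h] <;> norm_num

lemma eig_bound {n : ℕ} {A : Matrix (Fin n) (Fin n) ℝ} (hA : IsSignedAdj A) {μ : ℝ}
    {x : Fin n → ℝ} (hx : x ≠ 0) (hAx : A.mulVec x = μ • x) : μ ≤ (n : ℝ) - 1 := by
  obtain ⟨i, -, hmax⟩ := Finset.exists_max_image Finset.univ (fun j => |x j|)
    ⟨⟨0, Nat.pos_of_ne_zero (by rintro rfl; exact hx (funext fun k => absurd k.pos (by simp)))⟩, Finset.mem_univ _⟩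
  have hM : 0 < |x i| := by
    obtain ⟨k, hk⟩ := Function.ne_iff.mp hx
    exact lt_of_lt_of_le (abs_pos.mpr hk) (hmax k (Finset.mem_univ k))
  have h1 : μ * x i = ∑ j, A i j * x j := by
    have := congrFun hAx i
    simp [Matrix.mulVec, dotProduct] at this
    linarith [this]
  have h2 : |∑ j, A i j * x j| ≤ ((n:ℝ) - 1) * |x i| := by
    calc |∑ j, A i j * x j| ≤ ∑ j, |A i j * x j| := Finset.abs_sum_le_sum_abs _ _
    _ ≤ ∑ j, (if j = i then 0 else |x i|) := by
        apply Finset.sum_le_sum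
        intro j _
        by_cases hji : j = i
        · simp [hji, hA.2.1 i]
        · simp only [hji, if_false, abs_mul]
          calc |A i j| * |x j| ≤ 1 * |x i| :=
            mul_le_mul (abs_le_one hA i j) (hmax j (Finset.mem_univ j)) (abs_nonneg _) one_pos.le
          _ = |x i| := one_mul _
    _ = ((n:ℝ) - 1) * |x i| := by
        have hn1 : 1 ≤ n := i.pos
        have hc : (Finset.univ.filter (fun j => ¬ j = i)).card = n - 1 := by
          rw [Finset.filter_ne', Finset.card_erase_of_mem (Finset.mem_univ i)]
          simp
        rw [Finset.sum_ite, Finset.sum_const, Finset.sum_const, hc, smul_zero, zero_add,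
          nsmul_eq_mul, Nat.cast_sub hn1]
        push_cast
        ring
  have : μ * |x i| ≤ ((n:ℝ)-1) * |x i| := by
    calc μ * |x i| ≤ |μ| * |x i| := mul_le_mul_of_nonneg_right (le_abs_self μ) (abs_nonneg _)
    _ = |μ * x i| := (abs_mul μ (x i)).symm
    _ = |∑ j, A i j * x j| := by rw [h1]
    _ ≤ _ := h2
  exact le_of_mul_le_mul_right this hM

lemma force_eq {ι : Type*} {s : Finset ι} {f : ι → ℝ} {c : ℝ} (h : ∀ j ∈ s, f j ≤ c)
    (hsum : ∑ j ∈ s, f j = s.card * c) : ∀ j ∈ s, f j = c :=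
  (Finset.sum_eq_sum_iff_of_le h).mp (by rw [hsum, Finset.sum_const, nsmul_eq_mul])

lemma row_sum_eq {n : ℕ} {A : Matrix (Fin n) (Fin n) ℝ} (hA : IsSignedAdj A) {μ : ℝ}
    {z : Fin n → ℝ} (hAz : A.mulVec z = μ • z) (i : Fin n) :
    ∑ j ∈ Finset.univ.erase i, A i j * z j = μ * z i := by
  have h0 := congrFun hAz i
  simp [Matrix.mulVec, dotProduct] at h0
  rw [Finset.sum_erase _ (by simp [hA.2.1 i])]
  linarith [h0]

lemma card_erase_cast {n : ℕ} (i : Fin n) :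
    ((Finset.univ.erase i).card : ℝ) = (n : ℝ) - 1 := by
  rw [Finset.card_erase_of_mem (Finset.mem_univ i)]
  simp
  rw [Nat.cast_sub i.pos]
  push_cast; ring

lemma exists_pm_one {n : ℕ} {A : Matrix (Fin n) (Fin n) ℝ} (hA : IsSignedAdj A)
    {x : Fin n → ℝ} (hx : x ≠ 0) (hAx : A.mulVec x = ((n:ℝ) - 1) • x) :
    ∃ y : Fin n → ℝ, (∀ k, y k = 1 ∨ y k = -1) ∧ ∀ i j, i ≠ j → A i j = y i * y j := by
  obtain ⟨i, -, hmax⟩ := Finset.exists_max_image Finset.univ (fun j => |x j|)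
    ⟨⟨0, Nat.pos_of_ne_zero (by rintro rfl; exact hx (funext fun k => absurd k.pos (by simp)))⟩, Finset.mem_univ _⟩
  set M := |x i| with hMdef
  have hM : 0 < M := by
    obtain ⟨k, hk⟩ := Function.ne_iff.mp hx
    exact lt_of_lt_of_le (abs_pos.mpr hk) (hmax k (Finset.mem_univ k))
  -- step 1 : all |x j| = M
  set ε : ℝ := if 0 ≤ x i then 1 else -1 with hε
  have hεxi : ε * x i = M := by
    rw [hε, hMdef]
    split
    · rw [abs_of_nonneg (by assumption)]; ring
    · rw [abs_of_neg (by linarith [lt_of_not_ge (by assumption)])]; ring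
  have hstep1 : ∀ j, |x j| = M := by
    have hforce : ∀ j ∈ Finset.univ.erase i, ε * (A i j * x j) = M := by
      apply force_eq
      · intro j _
        calc ε * (A i j * x j) ≤ |ε * (A i j * x j)| := le_abs_self _
        _ = |ε| * (|A i j| * |x j|) := by rw [abs_mul, abs_mul]
        _ ≤ 1 * (1 * M) := by
            apply mul_le_mul _ (mul_le_mul (abs_le_one hA i j) (hmax j (Finset.mem_univ j))
              (abs_nonneg _) one_pos.le) (by positivity) one_pos.le
            rw [hε]; split <;> simp
        _ = M := by ring
      · rw [← Finset.mul_sum, row_sum_eq hA hAx i, card_erase_cast]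
        rw [← hεxi]; ring
    intro j
    rcases eq_or_ne j i with rfl | hji
    · rfl
    · have h1 := hforce j (Finset.mem_erase.mpr ⟨hji, Finset.mem_univ j⟩)
      have h2 : M = |ε * (A i j * x j)| := by rw [h1, abs_of_pos hM]
      have h3 : |ε * (A i j * x j)| ≤ |x j| := by
        rw [abs_mul, abs_mul]
        have he1 : |ε| = 1 := by rw [hε]; split <;> simp
        rw [he1, one_mul]
        calc |A i j| * |x j| ≤ 1 * |x j| :=
          mul_le_mul_of_nonneg_right (abs_le_one hA i j) (abs_nonneg _)
        _ = |x j| := one_mul _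
      exact le_antisymm (hmax j (Finset.mem_univ j)) (h2 ▸ h3)
  -- normalize
  set y : Fin n → ℝ := fun k => x k / M with hy
  have hy1 : ∀ k, y k = 1 ∨ y k = -1 := by
    intro k
    have : |y k| = 1 := by
      rw [hy]; simp only [abs_div, hstep1 k, abs_of_pos hM, div_self hM.ne']
    rcases abs_eq (by norm_num : (0:ℝ) ≤ 1) |>.mp this with h | h
    · exact Or.inl h
    · exact Or.inr h
  have hAy : A.mulVec y = ((n:ℝ) - 1) • y := by
    have : y = M⁻¹ • x := by funext k; simp [hy, div_eq_inv_mul]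
    rw [this, Matrix.mulVec_smul, hAx, smul_comm]
  refine ⟨y, hy1, ?_⟩
  intro a b hab
  have hsq : ∀ k, y k * y k = 1 := by
    intro k; rcases hy1 k with h | h <;> rw [h] <;> norm_num
  have hforce2 : ∀ j ∈ Finset.univ.erase a, y a * (A a j * y j) = 1 := by
    apply force_eq
    · intro j _
      calc y a * (A a j * y j) ≤ |y a * (A a j * y j)| := le_abs_self _
      _ = |y a| * (|A a j| * |y j|) := by rw [abs_mul, abs_mul]
      _ ≤ 1 * (1 * 1) := by
          have hya : |y a| = 1 := by rcases hy1 a with h | h <;> rw [h] <;> norm_num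
          have hyj : |y j| = 1 := by rcases hy1 j with h | h <;> rw [h] <;> norm_num
          rw [hya, hyj]
          simp [abs_le_one hA a j]
      _ = 1 := by ring
    · rw [← Finset.mul_sum, row_sum_eq hA hAy a, card_erase_cast]
      rw [show y a * (((n:ℝ)-1) * y a) = ((n:ℝ)-1) * (y a * y a) by ring, hsq a, mul_one]
  have h1 := hforce2 b (Finset.mem_erase.mpr ⟨hab.symm, Finset.mem_univ b⟩)
  calc A a b = (y a * y a) * A a b * (y b * y b) := by rw [hsq a, hsq b]; ring
  _ = (y a * (A a b * y b)) * (y a * y b) := by ring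
  _ = y a * y b := by rw [h1]; ring

lemma walkSign_eq {n : ℕ} {A : Matrix (Fin n) (Fin n) ℝ} {y : Fin n → ℝ}
    (hy : ∀ k, y k = 1 ∨ y k = -1) (hAy : ∀ i j, i ≠ j → A i j = y i * y j)
    {u v : Fin n} (w : (graphOf A).Walk u v) : walkSign A w = y u * y v := by
  induction w with
  | @nil a =>
    simp only [walkSign, SimpleGraph.Walk.darts_nil, List.map_nil, List.prod_nil]
    rcases hy a with h | h <;> rw [h] <;> norm_num
  | @cons a b c h w ih =>
    simp only [walkSign, SimpleGraph.Walk.darts_cons, List.map_cons, List.prod_cons] at *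
    rw [ih, hAy a b h.1]
    have : y b * y b = 1 := by rcases hy b with h | h <;> rw [h] <;> norm_num
    calc y a * y b * (y b * y c) = (y b * y b) * (y a * y c) := by ring
    _ = y a * y c := by rw [this]; ring

lemma eig_set_finite {n : ℕ} (A : Matrix (Fin n) (Fin n) ℝ) :
    Set.Finite {μ : ℝ | ∃ x : Fin n → ℝ, x ≠ 0 ∧ A.mulVec x = μ • x} := by
  apply Set.Finite.subset (Polynomial.finite_setOf_isRoot (A.charpoly_monic.ne_zero))
  rintro μ ⟨x, hx, hAx⟩
  have hdet : ((Matrix.scalar (Fin n) μ) - A).det = 0 := by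
    rw [← Matrix.exists_mulVec_eq_zero_iff]
    refine ⟨x, hx, ?_⟩
    rw [Matrix.sub_mulVec, hAx]
    funext i
    simp [Matrix.mulVec, dotProduct, Matrix.scalar_apply, Matrix.diagonal, Finset.sum_ite_eq,
      Matrix.of_apply]
  show Polynomial.IsRoot _ μ
  have : A.charpoly.eval μ = ((Matrix.scalar (Fin n) μ) - A).det := by
    rw [Matrix.charpoly, _root_.eval_det, Matrix.matPolyEquiv_charmatrix]
    simp
  rw [Polynomial.IsRoot, this, hdet]

lemma triangle_pos {n : ℕ} {A : Matrix (Fin n) (Fin n) ℝ}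
    (hb : IsBalancedOn A Set.univ)
    (hc : ∀ i j : Fin n, i ≠ j → A i j ≠ 0) {a b c : Fin n}
    (hab : a ≠ b) (hbc : b ≠ c) (hca : c ≠ a) :
    A a b * A b c * A c a = 1 := by
  have adjOf : ∀ p q : Fin n, p ≠ q → (graphOf A).Adj p q := fun p q h =>
    ⟨h, hc p q h, hc q p h.symm⟩
  let w : (graphOf A).Walk a a :=
    .cons (adjOf a b hab) (.cons (adjOf b c hbc) (.cons (adjOf c a hca) .nil))
  have hcyc : w.IsCycle := by
    rw [SimpleGraph.Walk.isCycle_def]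
    refine ⟨?_, ?_, ?_⟩
    · rw [SimpleGraph.Walk.isTrail_def]
      simp only [w, SimpleGraph.Walk.edges_cons, SimpleGraph.Walk.edges_nil]
      simp [List.nodup_cons, Sym2.eq_iff]
      have hac : ¬ a = c := fun h => hca h.symm
      have hba : ¬ b = a := fun h => hab h.symm
      have hcb : ¬ c = b := fun h => hbc h.symm
      tauto
    · simp [w]
    · simp only [w, SimpleGraph.Walk.support_cons, SimpleGraph.Walk.support_nil, List.tail_cons]
      simp [List.nodup_cons]
      have hac : ¬ a = c := fun h => hca h.symm
      have hba : ¬ b = a := fun h => hab h.symm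
      have hcb : ¬ c = b := fun h => hbc h.symm
      tauto
  have h1 := hb a w hcyc (fun v _ => Set.mem_univ v)
  simp only [walkSign, w, SimpleGraph.Walk.darts_cons, SimpleGraph.Walk.darts_nil,
    List.map_cons, List.map_nil, List.prod_cons, List.prod_nil] at h1
  calc A a b * A b c * A c a = A a b * (A b c * (A c a * 1)) := by ring
  _ = 1 := h1

lemma sq_one_of_pm {a : ℝ} (h : a = 1 ∨ a = -1) : a * a = 1 := by
  rcases h with h | h <;> rw [h] <;> norm_num

lemma pm_of_entry {n : ℕ} {A : Matrix (Fin n) (Fin n) ℝ} (hA : IsSignedAdj A)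
    {i j : Fin n} (h : A i j ≠ 0) : A i j = 1 ∨ A i j = -1 := by
  rcases hA.2.2 i j with h0 | h0 | h0
  · exact absurd h0 h
  · exact Or.inl h0
  · exact Or.inr h0

lemma balanced_complete_factor {n : ℕ} {A : Matrix (Fin n) (Fin n) ℝ} (hA : IsSignedAdj A)
    (hb : IsBalancedOn A Set.univ) (hc : ∀ i j : Fin n, i ≠ j → A i j ≠ 0) (hn : 0 < n) :
    ∃ y : Fin n → ℝ, (∀ k, y k = 1 ∨ y k = -1) ∧ ∀ i j, i ≠ j → A i j = y i * y j := by
  set i₀ : Fin n := ⟨0, hn⟩ with hi₀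
  set y : Fin n → ℝ := fun k => if k = i₀ then 1 else A i₀ k with hy
  have hpm : ∀ k, y k = 1 ∨ y k = -1 := by
    intro k
    rw [hy]
    by_cases hk : k = i₀
    · simp [hk]
    · simp only [hk, if_false]
      exact pm_of_entry hA (hc i₀ k (fun h => hk h.symm))
  refine ⟨y, hpm, ?_⟩
  intro i j hij
  by_cases hi : i = i₀
  · subst hi
    have hj : ¬ j = i₀ := fun h => hij h.symm
    simp [hy, hj]
  · by_cases hj : j = i₀
    · subst hj
      simp only [hy, hi, if_false, if_pos rfl]
      rw [hA.1 i i₀]; ring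
    · have htri := triangle_pos hb hc (a := i₀) (b := i) (c := j)
        (fun h => hi h.symm) hij hj
      have ha : A i₀ i * A i₀ i = 1 := sq_one_of_pm (pm_of_entry hA (hc i₀ i (fun h => hi h.symm)))
      have hcc : A i₀ j * A i₀ j = 1 := sq_one_of_pm (pm_of_entry hA (hc i₀ j (fun h => hj h.symm)))
      have hsymm : A j i₀ = A i₀ j := hA.1 j i₀
      rw [hsymm] at htri
      simp only [hy, hi, hj, if_false]
      calc A i j = (A i₀ i * A i₀ i) * A i j * (A i₀ j * A i₀ j) := by rw [ha, hcc]; ring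
      _ = (A i₀ i * A i j * A i₀ j) * (A i₀ i * A i₀ j) := by ring
      _ = A i₀ i * A i₀ j := by rw [htri]; ring

lemma factor_eigen {n : ℕ} {A : Matrix (Fin n) (Fin n) ℝ} (hA : IsSignedAdj A)
    {y : Fin n → ℝ} (hpm : ∀ k, y k = 1 ∨ y k = -1)
    (hf : ∀ i j : Fin n, i ≠ j → A i j = y i * y j) :
    A.mulVec y = ((n:ℝ) - 1) • y := by
  funext i
  show ∑ j, A i j * y j = _
  rw [show (∑ j, A i j * y j) = ∑ j ∈ Finset.univ.erase i, A i j * y j from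
    (Finset.sum_erase _ (by simp [hA.2.1 i])).symm]
  have : ∀ j ∈ Finset.univ.erase i, A i j * y j = y i := by
    intro j hj
    have hji : j ≠ i := (Finset.mem_erase.mp hj).1
    rw [hf i j (fun h => hji h.symm)]
    calc y i * y j * y j = y i * (y j * y j) := by ring
    _ = y i := by rw [sq_one_of_pm (hpm j)]; ring
  rw [Finset.sum_congr rfl this, Finset.sum_const, nsmul_eq_mul, card_erase_cast]
  simp

/-- For a non-empty signed graph on `n` vertices, `λ₁ ≤ n - 1`, with equality iff
the signed graph is balanced and complete. -/
theorem stmt11 {n : ℕ} (A : Matrix (Fin n) (Fin n) ℝ) (hA : IsSignedAdj A)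
    (hne : ∃ i j, A i j ≠ 0) :
    lam1 A ≤ (n : ℝ) - 1 ∧
      (lam1 A = (n : ℝ) - 1 ↔
        (IsBalancedOn A Set.univ ∧ ∀ i j : Fin n, i ≠ j → A i j ≠ 0)) := by
  obtain ⟨i₁, j₁, hij1⟩ := hne
  have hij1' : i₁ ≠ j₁ := by rintro rfl; exact hij1 (hA.2.1 i₁)
  have hn2 : 2 ≤ n := by
    have h1 := i₁.isLt; have h2 := j₁.isLt
    have : i₁.val ≠ j₁.val := fun h => hij1' (Fin.ext h)
    omega
  have hn2' : (2:ℝ) ≤ (n:ℝ) := by exact_mod_cast hn2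
  set S := {μ : ℝ | ∃ x : Fin n → ℝ, x ≠ 0 ∧ A.mulVec x = μ • x} with hS
  have hub : ∀ μ ∈ S, μ ≤ (n:ℝ) - 1 := by
    rintro μ ⟨x, hx, hAx⟩
    exact eig_bound hA hx hAx
  have hbdd : BddAbove S := ⟨(n:ℝ) - 1, hub⟩
  have hle : lam1 A ≤ (n:ℝ) - 1 := Real.sSup_le hub (by linarith)
  refine ⟨hle, ?_, ?_⟩
  · -- equality → balanced and complete
    intro heq
    have hSne : S.Nonempty := by
      by_contra h'
      rw [Set.not_nonempty_iff_eq_empty] at h'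
      rw [lam1, ← hS, h', Real.sSup_empty] at heq
      linarith
    have hmem : ((n:ℝ) - 1) ∈ S := by
      have := Set.Nonempty.csSup_mem hSne (eig_set_finite A)
      rwa [show sSup S = lam1 A from rfl, heq] at this
    obtain ⟨x, hx, hAx⟩ := hmem
    obtain ⟨y, hpm, hf⟩ := exists_pm_one hA hx hAx
    constructor
    · intro u w _ _
      rw [walkSign_eq hpm hf w]
      exact sq_one_of_pm (hpm u)
    · intro i j hij
      rw [hf i j hij]
      rcases hpm i with h | h <;> rcases hpm j with h' | h' <;> rw [h, h'] <;> norm_num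
  · -- balanced and complete → equality
    rintro ⟨hb, hc⟩
    obtain ⟨y, hpm, hf⟩ := balanced_complete_factor hA hb hc (by omega)
    have hy0 : y ≠ 0 := by
      intro h
      rcases hpm ⟨0, by omega⟩ with h' | h' <;> rw [h] at h' <;> norm_num at h'
    have hmem : ((n:ℝ) - 1) ∈ S := ⟨y, hy0, factor_eigen hA hpm hf⟩
    exact le_antisymm hle (le_csSup hbdd hmem)
end

section
/- Let Γ be a signed graph on n vertices with balanced clique number ω_b(Γ). Then λ_1(Γ) ≤ n(1 - 1/ω_b(Γ)). -/
open Matrix BigOperators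

private lemma list_prod_sq_one {α : Type*} (ε : α → ℝ) (hε : ∀ k, ε k * ε k = 1)
    (l : List α) : (l.map ε).prod * (l.map ε).prod = 1 := by
  induction l with
  | nil => simp
  | cons x t ih =>
    simp only [List.map_cons, List.prod_cons]
    calc (ε x * (t.map ε).prod) * (ε x * (t.map ε).prod)
        = (ε x * ε x) * ((t.map ε).prod * (t.map ε).prod) := by ring
      _ = 1 := by rw [hε, ih, mul_one]

private lemma list_prod_split {α : Type*} (f g h : α → ℝ) :
    ∀ L : List α, (∀ d ∈ L, f d = g d * h d) →
      (L.map f).prod = (L.map g).prod * (L.map h).prod := by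
  intro L
  induction L with
  | nil => simp
  | cons x t ih =>
    intro hL
    simp only [List.map_cons, List.prod_cons]
    rw [hL x (by simp), ih (fun d hd => hL d (by simp [hd]))]
    ring

private lemma dropLast_perm_tail {α : Type*} :
    ∀ (l : List α) (u : α), l.getLast? = some u → l.head? = some u →
      List.Perm l.dropLast l.tail := by
  intro l u hlast hhead
  cases l with
  | nil => simp at hhead
  | cons x t =>
    have hx : x = u := by simpa using hhead
    subst hx
    cases t with
    | nil => simp
    | cons y t' =>
      have hne : (y :: t') ≠ [] := by simp
      have hl2 : (y :: t').getLast? = some x := by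
        rw [List.getLast?_cons_cons] at hlast; exact hlast
      have hl3 : (y :: t').getLast hne = x := by
        have := List.getLast?_eq_getLast (l := y :: t') hne
        rw [hl2] at this; exact (Option.some_injective _ this).symm
      show List.Perm (x :: (y :: t').dropLast) (y :: t')
      conv_rhs => rw [← List.dropLast_append_getLast hne, hl3]
      exact (List.perm_append_singleton _ _).symm

private lemma balanced_aux {n : ℕ} (A : Matrix (Fin n) (Fin n) ℝ) (ε : Fin n → ℝ)
    (hε : ∀ k, ε k * ε k = 1) (S : Set (Fin n))
    (h : ∀ k ∈ S, ∀ l ∈ S, k ≠ l → A k l = ε k * ε l) :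
    IsBalancedOn A S := by
  intro u w _hc hsupp
  unfold walkSign
  have hsplit : (w.darts.map fun d => A d.fst d.snd).prod
      = (w.darts.map fun d => ε d.fst).prod * (w.darts.map fun d => ε d.snd).prod := by
    apply list_prod_split
    intro d hd
    exact h d.fst (hsupp _ (w.dart_fst_mem_support_of_mem_darts hd))
      d.snd (hsupp _ (w.dart_snd_mem_support_of_mem_darts hd)) d.adj.1
  rw [hsplit]
  have hfst : (w.darts.map fun d => ε d.fst) = (w.support.dropLast).map ε := by
    rw [← SimpleGraph.Walk.map_fst_darts, List.map_map]; rfl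
  have hsnd : (w.darts.map fun d => ε d.snd) = (w.support.tail).map ε := by
    rw [← SimpleGraph.Walk.map_snd_darts, List.map_map]; rfl
  rw [hfst, hsnd]
  have hperm : List.Perm (w.support.dropLast) (w.support.tail) := by
    apply dropLast_perm_tail w.support u
    · have h1 := List.getLast?_eq_getLast (l := w.support) (by simp)
      rw [w.getLast_support] at h1; exact h1
    · rw [w.support_eq_cons]; rfl
  rw [(hperm.map ε).prod_eq]
  exact list_prod_sq_one ε hε _

private lemma MS_step {n : ℕ} (a : Matrix (Fin n) (Fin n) ℝ)
    (hsymm : ∀ i j, a i j = a j i) (hdiag : ∀ i, a i i = 0)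
    (y : Fin n → ℝ) (hy : ∀ i, 0 ≤ y i) (i j : Fin n) (hij : i ≠ j)
    (hyi : y i ≠ 0) (haij : a i j = 0)
    (hle : (∑ l, a l j * y l) ≤ ∑ l, a l i * y l) :
    ∃ y' : Fin n → ℝ, (∀ k, 0 ≤ y' k) ∧ (∑ k, y' k) = (∑ k, y k) ∧
      (∀ k, y' k ≠ 0 → y k ≠ 0 ∧ k ≠ j) ∧
      ∑ k, ∑ l, a k l * (y k * y l) ≤ ∑ k, ∑ l, a k l * (y' k * y' l) := by
  have haji : a j i = 0 := by rw [hsymm]; exact haij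
  set c := y j with hc
  set d : Fin n → ℝ := fun k => (if k = i then c else 0) - (if k = j then c else 0) with hd
  set y' : Fin n → ℝ := fun k => y k + d k with hy'
  have hdi : d i = c := by simp [hd, hij]
  have hdj : d j = -c := by simp [hd, hij.symm]
  have hdk : ∀ k, k ≠ i → k ≠ j → d k = 0 := by intro k h1 h2; simp [hd, h1, h2]
  have hinner : ∀ g : Fin n → ℝ, (∑ l, g l * d l) = g i * c - g j * c := by
    intro g
    simp only [hd, mul_sub, mul_ite, mul_zero, Finset.sum_sub_distrib,
      Finset.sum_ite_eq', Finset.mem_univ, if_pos]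
  refine ⟨y', ?_, ?_, ?_, ?_⟩
  · intro k
    by_cases h1 : k = i
    · subst h1; simp only [hy', hdi]; have h3 := hy k; have h4 := hy j
      simp only [hc]; linarith
    · by_cases h2 : k = j
      · subst h2; simp only [hy', hdj]; simp [hc]
      · simp only [hy', hdk k h1 h2]; simpa using hy k
  · have : (∑ k, d k) = 0 := by
      have := hinner (fun _ => (1 : ℝ))
      simp only [one_mul] at this
      rw [this]; ring
    simp only [hy', Finset.sum_add_distrib, this, add_zero]
  · intro k hk
    by_cases h1 : k = i
    · subst h1; exact ⟨hyi, hij⟩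
    · by_cases h2 : k = j
      · exfalso; apply hk; subst h2; simp only [hy', hdj]; simp [hc]
      · refine ⟨?_, h2⟩; simpa only [hy', hdk k h1 h2, add_zero] using hk
  · have hsum1 : ∀ k, (∑ l, a k l * d l) = a k i * c - a k j * c := fun k => hinner (a k)
    have perk : ∀ k, (∑ l, a k l * (y' k * y' l))
        = (∑ l, a k l * (y k * y l)) + (y k * (a k i * c - a k j * c)
          + ((∑ l, a k l * y l) * d k + (a k i * c - a k j * c) * d k)) := by
      intro k
      have e1 : ∀ l, a k l * (y' k * y' l)
          = a k l * (y k * y l) + (y k * (a k l * d l)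
            + ((a k l * y l) * d k + (a k l * d l) * d k)) := by
        intro l; simp only [hy']; ring
      rw [Finset.sum_congr rfl (fun l _ => e1 l)]
      rw [Finset.sum_add_distrib, Finset.sum_add_distrib, Finset.sum_add_distrib,
        ← Finset.mul_sum, ← Finset.sum_mul, ← Finset.sum_mul, hsum1 k]
    have key : (∑ k, ∑ l, a k l * (y' k * y' l))
        = (∑ k, ∑ l, a k l * (y k * y l))
          + 2 * c * ((∑ l, a l i * y l) - (∑ l, a l j * y l)) := by
      rw [Finset.sum_congr rfl (fun k _ => perk k)]
      rw [Finset.sum_add_distrib, Finset.sum_add_distrib, Finset.sum_add_distrib]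
      have t1 : (∑ k, y k * (a k i * c - a k j * c))
          = c * (∑ l, a l i * y l) - c * (∑ l, a l j * y l) := by
        simp only [mul_sub, Finset.sum_sub_distrib, Finset.mul_sum]
        congr 1 <;> (apply Finset.sum_congr rfl; intro k _; ring)
      have t2 : (∑ k, (∑ l, a k l * y l) * d k)
          = c * (∑ l, a l i * y l) - c * (∑ l, a l j * y l) := by
        rw [hinner (fun k => ∑ l, a k l * y l)]
        have e1 : (∑ l, a i l * y l) = ∑ l, a l i * y l := by
          apply Finset.sum_congr rfl; intro l _; rw [hsymm]
        have e2 : (∑ l, a j l * y l) = ∑ l, a l j * y l := by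
          apply Finset.sum_congr rfl; intro l _; rw [hsymm]
        rw [e1, e2]; ring
      have t3 : (∑ k, (a k i * c - a k j * c) * d k) = 0 := by
        rw [hinner (fun k => a k i * c - a k j * c)]
        rw [hdiag i, hdiag j, haij, haji]; ring
      rw [t1, t2, t3]; ring
    rw [key]
    have hcnn : 0 ≤ c := hy j
    nlinarith [mul_nonneg hcnn (sub_nonneg.mpr hle)]

private lemma MS_aux {n : ℕ} (a : Matrix (Fin n) (Fin n) ℝ) (ω : ℕ)
    (hsymm : ∀ i j, a i j = a j i) (hdiag : ∀ i, a i i = 0)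
    (h01 : ∀ i j, a i j = 0 ∨ a i j = 1) (hω : 1 ≤ ω)
    (hcl : ∀ S : Finset (Fin n), (∀ i ∈ S, ∀ j ∈ S, i ≠ j → a i j = 1) → S.card ≤ ω) :
    ∀ (m : ℕ) (y : Fin n → ℝ), (∀ i, 0 ≤ y i) →
      (Finset.univ.filter fun i => y i ≠ 0).card ≤ m →
      (∑ k, ∑ l, a k l * (y k * y l)) ≤ (1 - 1/(ω:ℝ)) * (∑ i, y i)^2 := by
  have hω1 : (1:ℝ) ≤ (ω:ℝ) := by exact_mod_cast hω
  have hω0 : (0:ℝ) ≤ 1 - 1/(ω:ℝ) := by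
    have h2 : 1/(ω:ℝ) ≤ 1 := by rw [div_le_one (by linarith)]; linarith
    linarith
  intro m
  induction m with
  | zero =>
    intro y hy hcard
    have hy0 : ∀ i, y i = 0 := by
      intro i; by_contra h
      have hmem : i ∈ Finset.univ.filter fun i => y i ≠ 0 := by simp [h]
      have := Finset.card_pos.mpr ⟨i, hmem⟩; omega
    have h1 : (∑ k, ∑ l, a k l * (y k * y l)) = 0 := by
      apply Finset.sum_eq_zero; intro k _
      apply Finset.sum_eq_zero; intro l _
      rw [hy0 k]; ring
    have h2 : (∑ i, y i) = 0 := Finset.sum_eq_zero fun i _ => hy0 i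
    rw [h1, h2]
    positivity
  | succ m ih =>
    intro y hy hcard
    set S := Finset.univ.filter (fun i => y i ≠ 0) with hS
    by_cases hcl2 : ∀ i ∈ S, ∀ j ∈ S, i ≠ j → a i j = 1
    · rcases Finset.eq_empty_or_nonempty S with hSe | hSne
      · have hy0 : ∀ i, y i = 0 := by
          intro i; by_contra h
          have hmem : i ∈ S := by simp [hS, h]
          rw [hSe] at hmem; simp at hmem
        have h1 : (∑ k, ∑ l, a k l * (y k * y l)) = 0 := by
          apply Finset.sum_eq_zero; intro k _
          apply Finset.sum_eq_zero; intro l _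
          rw [hy0 k]; ring
        have h2 : (∑ i, y i) = 0 := Finset.sum_eq_zero fun i _ => hy0 i
        rw [h1, h2]; positivity
      · have hkω : S.card ≤ ω := hcl S hcl2
        have hk1 : 1 ≤ S.card := Finset.card_pos.mpr hSne
        have hk1' : (1:ℝ) ≤ (S.card : ℝ) := by exact_mod_cast hk1
        have hkω' : (S.card : ℝ) ≤ (ω : ℝ) := by exact_mod_cast hkω
        have step1 : (∑ k, ∑ l, a k l * (y k * y l))
            ≤ (∑ i, y i)^2 - ∑ i, y i * y i := by
          have hle : (∑ k, ∑ l, a k l * (y k * y l))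
              ≤ ∑ k, ∑ l, (if k = l then 0 else y k * y l) := by
            apply Finset.sum_le_sum; intro k _
            apply Finset.sum_le_sum; intro l _
            by_cases hkl : k = l
            · subst hkl; rw [hdiag]; simp
            · rw [if_neg hkl]
              rcases h01 k l with h | h
              · rw [h, zero_mul]; exact mul_nonneg (hy k) (hy l)
              · rw [h, one_mul]
          have heq : (∑ k, ∑ l, (if k = l then (0:ℝ) else y k * y l))
              = (∑ i, y i)^2 - ∑ i, y i * y i := by
            have e1 : ∀ k, (∑ l, (if k = l then (0:ℝ) else y k * y l))
                = (∑ l, y k * y l) - y k * y k := by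
              intro k
              have e2 : (∑ l, (if k = l then (0:ℝ) else y k * y l))
                  = ∑ l, (y k * y l - if k = l then y k * y l else 0) := by
                apply Finset.sum_congr rfl; intro l _
                by_cases h : k = l <;> simp [h]
              rw [e2, Finset.sum_sub_distrib, Finset.sum_ite_eq, if_pos (Finset.mem_univ k)]
            rw [Finset.sum_congr rfl (fun k _ => e1 k), Finset.sum_sub_distrib]
            rw [sq, Finset.sum_mul_sum]
          rw [heq] at hle; exact hle
        have step2 : (∑ i, y i)^2 ≤ (S.card : ℝ) * ∑ i, y i * y i := by
          have e1 : (∑ i, y i) = ∑ i ∈ S, y i := (Finset.sum_filter_ne_zero _).symm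
          have e2 : (∑ i ∈ S, y i)^2 ≤ (S.card : ℝ) * ∑ i ∈ S, y i ^ 2 := by
            have := sq_sum_le_card_mul_sum_sq (s := S) (f := y)
            exact_mod_cast this
          have e3 : (∑ i ∈ S, y i ^ 2) ≤ ∑ i, y i ^ 2 := by
            apply Finset.sum_le_sum_of_subset_of_nonneg (Finset.subset_univ S)
            intro i _ _; positivity
          have e4 : (∑ i, y i ^ 2) = ∑ i, y i * y i := by
            apply Finset.sum_congr rfl; intro i _; ring
          rw [e1]
          calc (∑ i ∈ S, y i)^2 ≤ (S.card : ℝ) * ∑ i ∈ S, y i ^ 2 := e2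
            _ ≤ (S.card : ℝ) * ∑ i, y i ^ 2 := by
                apply mul_le_mul_of_nonneg_left e3; positivity
            _ = (S.card : ℝ) * ∑ i, y i * y i := by rw [e4]
        have hfrac : (1/(ω:ℝ)) * (∑ i, y i)^2 ≤ ∑ i, y i * y i := by
          have hkpos : (0:ℝ) < (S.card : ℝ) := by linarith
          have h1 : (1/(S.card:ℝ)) * (∑ i, y i)^2 ≤ ∑ i, y i * y i := by
            rw [div_mul_eq_mul_div, div_le_iff₀ hkpos]
            calc (1 * (∑ i, y i)^2) = (∑ i, y i)^2 := by ring
              _ ≤ (S.card : ℝ) * ∑ i, y i * y i := step2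
              _ = (∑ i, y i * y i) * (S.card : ℝ) := by ring
          have h2 : (1/(ω:ℝ)) ≤ 1/(S.card:ℝ) :=
            one_div_le_one_div_of_le hkpos hkω'
          calc (1/(ω:ℝ)) * (∑ i, y i)^2 ≤ (1/(S.card:ℝ)) * (∑ i, y i)^2 :=
                mul_le_mul_of_nonneg_right h2 (sq_nonneg _)
            _ ≤ ∑ i, y i * y i := h1
        have hring : (1 - 1/(ω:ℝ)) * (∑ i, y i)^2
            = (∑ i, y i)^2 - (1/(ω:ℝ)) * (∑ i, y i)^2 := by ring
        linarith
    · push_neg at hcl2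
      obtain ⟨i, hiS, j, hjS, hij, hne1⟩ := hcl2
      have haij : a i j = 0 := (h01 i j).resolve_right hne1
      have hyi : y i ≠ 0 := by simpa [hS] using hiS
      have hyj : y j ≠ 0 := by simpa [hS] using hjS
      have main : ∀ (i' j' : Fin n), i' ≠ j' → y i' ≠ 0 → j' ∈ S → a i' j' = 0 →
          (∑ l, a l j' * y l) ≤ (∑ l, a l i' * y l) →
          (∑ k, ∑ l, a k l * (y k * y l)) ≤ (1 - 1/(ω:ℝ)) * (∑ i, y i)^2 := by
        intro i' j' hij' hyi' hj'S haij' hle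
        obtain ⟨y', hy'nn, hsum, hsupp, hmono⟩ :=
          MS_step a hsymm hdiag y hy i' j' hij' hyi' haij' hle
        have hsub : (Finset.univ.filter fun k => y' k ≠ 0) ⊆ S.erase j' := by
          intro k hk
          have hk' : y' k ≠ 0 := by simpa using hk
          obtain ⟨h1, h2⟩ := hsupp k hk'
          exact Finset.mem_erase.mpr ⟨h2, by simp [hS, h1]⟩
        have hcard' : (Finset.univ.filter fun k => y' k ≠ 0).card ≤ m := by
          have h1 := Finset.card_le_card hsub
          rw [Finset.card_erase_of_mem hj'S] at h1
          have h2 : S.card ≤ m + 1 := hcard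
          omega
        calc (∑ k, ∑ l, a k l * (y k * y l))
            ≤ ∑ k, ∑ l, a k l * (y' k * y' l) := hmono
          _ ≤ (1 - 1/(ω:ℝ)) * (∑ i, y' i)^2 := ih y' hy'nn hcard'
          _ = (1 - 1/(ω:ℝ)) * (∑ i, y i)^2 := by rw [hsum]
      rcases le_total (∑ l, a l j * y l) (∑ l, a l i * y l) with hle | hle
      · exact main i j hij hyi hjS haij hle
      · exact main j i hij.symm hyj hiS (by rw [hsymm]; exact haij) hle

/-- If `ω` is the balanced clique number of a signed graph on `n` vertices, then
`λ₁ ≤ n (1 - 1/ω)`. -/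
theorem stmt13 {n : ℕ} (A : Matrix (Fin n) (Fin n) ℝ) (hA : IsSignedAdj A) (ω : ℕ)
    (hω : IsGreatest {m : ℕ | ∃ S : Finset (Fin n), S.card = m ∧
      IsCompleteOn A ↑S ∧ IsBalancedOn A ↑S} ω) :
    lam1 A ≤ (n : ℝ) * (1 - 1 / (ω : ℝ)) := by
  obtain ⟨hAsymm, hAdiag, hA01⟩ := hA
  have hωge : ∀ _i0 : Fin n, 1 ≤ ω := by
    intro i0
    apply hω.2
    refine ⟨{i0}, Finset.card_singleton _, ?_, ?_⟩
    · intro i hi j hj hij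
      exfalso; apply hij
      have h1 : i = i0 := by simpa using hi
      have h2 : j = i0 := by simpa using hj
      rw [h1, h2]
    · apply balanced_aux A (fun _ => 1) (by intro k; norm_num)
      intro k hk l hl hkl
      exfalso; apply hkl
      have h1 : k = i0 := by simpa using hk
      have h2 : l = i0 := by simpa using hl
      rw [h1, h2]
  unfold lam1
  apply Real.sSup_le
  · rintro μ ⟨x, hx0, hx⟩
    obtain ⟨i0, hxi0⟩ := Function.ne_iff.mp hx0
    have hω1 : 1 ≤ ω := hωge i0
    have hω1R : (1:ℝ) ≤ (ω:ℝ) := by exact_mod_cast hω1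
    have hωnn : (0:ℝ) ≤ 1 - 1/(ω:ℝ) := by
      have h2 : 1/(ω:ℝ) ≤ 1 := by rw [div_le_one (by linarith)]; linarith
      linarith
    set ε : Fin n → ℝ := fun k => if x k < 0 then -1 else 1 with hεdef
    have hε2 : ∀ k, ε k * ε k = 1 := by
      intro k; simp only [hεdef]; split <;> norm_num
    have hε1 : ∀ k, ε k = 1 ∨ ε k = -1 := by
      intro k; simp only [hεdef]; split
      · right; rfl
      · left; rfl
    set y : Fin n → ℝ := fun k => |x k| with hydef
    have hynn : ∀ k, 0 ≤ y k := fun k => abs_nonneg _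
    have hεx : ∀ k, ε k * y k = x k := by
      intro k; simp only [hεdef, hydef]; split
      · rename_i h; rw [abs_of_neg h]; ring
      · rename_i h; rw [abs_of_nonneg (not_lt.mp h)]; ring
    set B : Fin n → Fin n → ℝ := fun k l => ε k * ε l * A k l with hBdef
    set a : Matrix (Fin n) (Fin n) ℝ := fun k l => if B k l = 1 then (1:ℝ) else 0 with hadef
    have hasymm : ∀ k l, a k l = a l k := by
      intro k l; simp only [hadef]
      have hBs : B k l = B l k := by simp only [hBdef]; rw [hAsymm k l]; ring
      rw [hBs]
    have hadiag : ∀ k, a k k = 0 := by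
      intro k; simp only [hadef]
      have hB0 : B k k = 0 := by simp only [hBdef]; rw [hAdiag]; ring
      rw [hB0]; norm_num
    have ha01 : ∀ k l, a k l = 0 ∨ a k l = 1 := by
      intro k l; simp only [hadef]; split
      · right; rfl
      · left; rfl
    have hA_from_B1 : ∀ k l, B k l = 1 → A k l = ε k * ε l := by
      intro k l h
      have h' : ε k * ε l * A k l = 1 := by simpa only [hBdef] using h
      rcases hε1 k with h1 | h1 <;> rcases hε1 l with h2 | h2 <;>
        rw [h1, h2] at h' ⊢ <;> linarith
    have hclique : ∀ S : Finset (Fin n),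
        (∀ i ∈ S, ∀ j ∈ S, i ≠ j → a i j = 1) → S.card ≤ ω := by
      intro S hScl
      have hB1 : ∀ k ∈ S, ∀ l ∈ S, k ≠ l → B k l = 1 := by
        intro k hk l hl hkl
        have h := hScl k hk l hl hkl
        simp only [hadef] at h
        by_contra hB; rw [if_neg hB] at h; norm_num at h
      apply hω.2
      refine ⟨S, rfl, ?_, ?_⟩
      · intro k hk l hl hkl
        have hk' : k ∈ S := by simpa using hk
        have hl' : l ∈ S := by simpa using hl
        rw [hA_from_B1 k l (hB1 k hk' l hl' hkl)]
        rcases hε1 k with h1 | h1 <;> rcases hε1 l with h2 | h2 <;>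
          rw [h1, h2] <;> norm_num
      · apply balanced_aux A ε hε2
        intro k hk l hl hkl
        exact hA_from_B1 k l (hB1 k (by simpa using hk) l (by simpa using hl) hkl)
    have hmu : μ * (∑ i, x i * x i) = ∑ k, ∑ l, A k l * (x k * x l) := by
      have h2 : ∀ k, (∑ l, A k l * x l) = μ * x k := by
        intro k
        have h1 : (A.mulVec x) k = (μ • x) k := by rw [hx]
        simpa [Matrix.mulVec, dotProduct] using h1
      calc μ * (∑ i, x i * x i) = ∑ i, x i * (μ * x i) := by
            rw [Finset.mul_sum]; apply Finset.sum_congr rfl; intro i _; ring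
        _ = ∑ k, x k * (∑ l, A k l * x l) := by
            apply Finset.sum_congr rfl; intro k _; rw [h2]
        _ = ∑ k, ∑ l, A k l * (x k * x l) := by
            apply Finset.sum_congr rfl; intro k _
            rw [Finset.mul_sum]; apply Finset.sum_congr rfl; intro l _; ring
    have hxy : (∑ k, ∑ l, A k l * (x k * x l)) ≤ ∑ k, ∑ l, a k l * (y k * y l) := by
      apply Finset.sum_le_sum; intro k _
      apply Finset.sum_le_sum; intro l _
      have e1 : A k l * (x k * x l) = B k l * (y k * y l) := by
        rw [← hεx k, ← hεx l]; simp only [hBdef]; ring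
      rw [e1]
      by_cases hB : B k l = 1
      · simp only [hadef]; rw [if_pos hB, hB]
      · simp only [hadef]; rw [if_neg hB]
        have hBle : B k l ≤ 0 := by
          rcases hε1 k with h1 | h1 <;> rcases hε1 l with h2 | h2 <;>
            rcases hA01 k l with h3 | h3 | h3 <;>
            simp only [hBdef, h1, h2, h3] at hB ⊢ <;> (norm_num at hB) <;> norm_num
        have hyyn : 0 ≤ y k * y l := mul_nonneg (hynn k) (hynn l)
        nlinarith
    have hMS := MS_aux a ω hasymm hadiag ha01 hω1 hclique n y hynn (by
      calc (Finset.univ.filter fun i => y i ≠ 0).card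
          ≤ Finset.univ.card := Finset.card_filter_le _ _
        _ = n := by simp)
    have hcs : (∑ i, y i)^2 ≤ (n:ℝ) * ∑ i, y i * y i := by
      have h1 := sq_sum_le_card_mul_sum_sq (s := (Finset.univ : Finset (Fin n))) (f := y)
      have e4 : (∑ i, y i ^ 2) = ∑ i, y i * y i := by
        apply Finset.sum_congr rfl; intro i _; ring
      rw [Finset.card_univ, Fintype.card_fin] at h1
      rw [← e4]
      exact_mod_cast h1
    have hyx : (∑ i, y i * y i) = ∑ i, x i * x i := by
      apply Finset.sum_congr rfl; intro i _
      simp only [hydef]; rw [abs_mul_abs_self]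
    have hxpos : 0 < ∑ i, x i * x i := by
      apply Finset.sum_pos' (fun i _ => mul_self_nonneg (x i))
      exact ⟨i0, Finset.mem_univ _, mul_self_pos.mpr hxi0⟩
    have final : μ * (∑ i, x i * x i) ≤ ((n:ℝ) * (1 - 1/(ω:ℝ))) * (∑ i, x i * x i) := by
      calc μ * (∑ i, x i * x i) = ∑ k, ∑ l, A k l * (x k * x l) := hmu
        _ ≤ ∑ k, ∑ l, a k l * (y k * y l) := hxy
        _ ≤ (1 - 1/(ω:ℝ)) * (∑ i, y i)^2 := hMS
        _ ≤ (1 - 1/(ω:ℝ)) * ((n:ℝ) * ∑ i, y i * y i) :=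
            mul_le_mul_of_nonneg_left hcs hωnn
        _ = ((n:ℝ) * (1 - 1/(ω:ℝ))) * (∑ i, x i * x i) := by rw [hyx]; ring
    exact le_of_mul_le_mul_right final hxpos
  · rcases Nat.eq_zero_or_pos n with hn | hn
    · subst hn; norm_num
    · have hω1 : 1 ≤ ω := hωge ⟨0, hn⟩
      have hω1R : (1:ℝ) ≤ (ω:ℝ) := by exact_mod_cast hω1
      have hωnn : (0:ℝ) ≤ 1 - 1/(ω:ℝ) := by
        have h2 : 1/(ω:ℝ) ≤ 1 := by rw [div_le_one (by linarith)]; linarith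
        linarith
      exact mul_nonneg (by positivity) hωnn
end

section
/- Let Γ be a signed graph on n ≥ 2r vertices for an integer r ≥ 4, and let -Γ be its negation. If the spectral radius ρ(Γ) > n - 2 and -Γ contains no balanced complete subgraph on r+1 vertices (equivalently, -Γ is K⁺_{r+1}-free), then ρ(Γ) = λ_1(Γ), i.e., the spectral radius is attained by the largest eigenvalue rather than by -λ_n(Γ). -/
open Matrix BigOperators

open Finset

lemma sum_e_mul {N : ℕ} (a b : Fin N) (g : Fin N → ℝ) :
    ∑ i, ((if i = a then (1:ℝ) else 0) - (if i = b then 1 else 0)) * g i = g a - g b := by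
  simp only [sub_mul, ite_mul, one_mul, zero_mul, Finset.sum_sub_distrib]
  rw [Finset.sum_ite_eq' Finset.univ a g, Finset.sum_ite_eq' Finset.univ b g]
  simp

lemma ms_lemma {N r : ℕ} (hr : 0 < r) (w : Fin N → Fin N → ℝ)
    (hsym : ∀ i j, w i j = w j i) (hdiag : ∀ i, w i i = 0)
    (h0 : ∀ i j, 0 ≤ w i j) (h1 : ∀ i j, w i j ≤ 1)
    (hclique : ∀ S : Finset (Fin N), (∀ i ∈ S, ∀ j ∈ S, i ≠ j → 0 < w i j) → S.card ≤ r)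
    (y : Fin N → ℝ) (hy : ∀ i, 0 ≤ y i) :
    ∑ i, ∑ j, w i j * y i * y j ≤ (1 - 1/r) * (∑ i, y i)^2 := by
  have hrR : (0:ℝ) < r := by exact_mod_cast hr
  suffices H : ∀ (k : ℕ) (y : Fin N → ℝ), (∀ i, 0 ≤ y i) →
      (Finset.univ.filter (fun i => y i ≠ 0)).card ≤ k →
      ∑ i, ∑ j, w i j * y i * y j ≤ (1 - 1/r) * (∑ i, y i)^2 by
    exact H _ y hy le_rfl
  intro k
  induction k with
  | zero =>
    intro y hy hcard
    have hfe : Finset.univ.filter (fun i => y i ≠ 0) = ∅ :=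
      Finset.card_eq_zero.mp (Nat.le_zero.mp hcard)
    have hy0 : ∀ i, y i = 0 := by
      intro i
      by_contra h
      have : i ∈ Finset.univ.filter (fun i => y i ≠ 0) := by simp [h]
      simp [hfe] at this
    simp [hy0]
  | succ k ih =>
    intro y hy hcard
    set supp := Finset.univ.filter (fun i => y i ≠ 0) with hsupp
    by_cases hcl : ∀ i ∈ supp, ∀ j ∈ supp, i ≠ j → 0 < w i j
    · -- support is a clique
      have hk : supp.card ≤ r := hclique supp hcl
      have diag_sum : ∑ i, ∑ j, (if i = j then (0:ℝ) else y i * y j)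
          = (∑ i, y i)^2 - ∑ i, (y i)^2 := by
        have h1i : ∀ i : Fin N, ∑ j, (if i = j then (0:ℝ) else y i * y j)
            = (∑ j, y i * y j) - (y i)^2 := by
          intro i
          have hterm : ∀ j : Fin N, (if i = j then (0:ℝ) else y i * y j)
              = y i * y j - (if j = i then y i * y j else 0) := by
            intro j
            by_cases hij : i = j
            · subst hij; simp
            · have hji : ¬ j = i := fun h => hij h.symm
              simp [hij, hji]
          rw [Finset.sum_congr rfl fun j _ => hterm j, Finset.sum_sub_distrib,
            Finset.sum_ite_eq' Finset.univ i (fun j => y i * y j)]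
          simp [pow_two]
        rw [Finset.sum_congr rfl fun i _ => h1i i, Finset.sum_sub_distrib]
        congr 1
        rw [pow_two, Finset.sum_mul_sum]
      have step1 : ∑ i, ∑ j, w i j * y i * y j ≤ (∑ i, y i)^2 - ∑ i, (y i)^2 := by
        rw [← diag_sum]
        apply Finset.sum_le_sum
        intro i _
        apply Finset.sum_le_sum
        intro j _
        by_cases hij : i = j
        · subst hij; simp [hdiag i]
        · simp only [hij, if_false]
          have : w i j * (y i * y j) ≤ 1 * (y i * y j) :=
            mul_le_mul_of_nonneg_right (h1 i j) (mul_nonneg (hy i) (hy j))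
          calc w i j * y i * y j = w i j * (y i * y j) := by ring
            _ ≤ 1 * (y i * y j) := this
            _ = y i * y j := by ring
      have hsum_supp : ∑ i, y i = ∑ i ∈ supp, y i := (Finset.sum_filter_ne_zero Finset.univ).symm
      have hCS : (∑ i, y i)^2 ≤ (r:ℝ) * ∑ i, (y i)^2 := by
        have hcs := Finset.sum_mul_sq_le_sq_mul_sq supp (fun _ => (1:ℝ)) y
        simp only [one_mul, one_pow] at hcs
        have hsq : ∑ _i ∈ supp, (1:ℝ) = supp.card := by simp
        rw [hsum_supp]
        calc (∑ i ∈ supp, y i)^2 ≤ (∑ _i ∈ supp, (1:ℝ)) * ∑ i ∈ supp, (y i)^2 := hcs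
          _ = (supp.card : ℝ) * ∑ i ∈ supp, (y i)^2 := by rw [hsq]
          _ ≤ (r:ℝ) * ∑ i, (y i)^2 := by
              apply mul_le_mul
              · exact_mod_cast hk
              · exact Finset.sum_le_sum_of_subset_of_nonneg (Finset.filter_subset _ _)
                  (fun i _ _ => sq_nonneg _)
              · exact Finset.sum_nonneg (fun i _ => sq_nonneg _)
              · positivity
      have hdiv : (∑ i, y i)^2 / r ≤ ∑ i, (y i)^2 := by
        rw [div_le_iff₀ hrR]; linarith [hCS]
      have expand : (1 - 1/(r:ℝ)) * (∑ i, y i)^2 = (∑ i, y i)^2 - (∑ i, y i)^2 / r := by ring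
      linarith [step1]
    · -- shift weight
      push_neg at hcl
      obtain ⟨u, hu, v, hv, huv, hwuv⟩ := hcl
      have main : ∀ a b : Fin N, a ∈ supp → b ∈ supp → a ≠ b → w a b = 0 →
          (∑ j, w b j * y j) ≤ (∑ j, w a j * y j) →
          ∑ i, ∑ j, w i j * y i * y j ≤ (1 - 1/r) * (∑ i, y i)^2 := by
        intro a b ha hb hab hwab hd
        set c := y b with hc
        set e := fun i => (if i = a then (1:ℝ) else 0) - (if i = b then 1 else 0) with he
        set y' := fun i => y i + c * e i with hy'
        set d := fun t => ∑ j, w t j * y j with hdd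
        have hyb0 : y b ≠ 0 := (Finset.mem_filter.mp hb).2
        have hyb : 0 < y b := lt_of_le_of_ne (hy b) (Ne.symm hyb0)
        have hya' : y' a = y a + c := by simp [hy', he, hab]
        have hyb' : y' b = 0 := by simp [hy', he, Ne.symm hab, hc]
        have hyother : ∀ i, i ≠ a → i ≠ b → y' i = y i := by
          intro i hia hib; simp [hy', he, hia, hib]
        have hy'nn : ∀ i, 0 ≤ y' i := by
          intro i
          by_cases hia : i = a
          · rw [hia, hya']; have h9 := hy a; linarith
          · by_cases hib : i = b
            · subst hib; rw [hyb']
            · rw [hyother i hia hib]; exact hy i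
        have hesum : ∀ (g : Fin N → ℝ), ∑ i, e i * g i = g a - g b := by
          intro g; simp only [he]; exact sum_e_mul a b g
        have hsum' : ∑ i, y' i = ∑ i, y i := by
          have h2 : ∑ i, y' i = ∑ i, y i + c * ∑ i, e i := by
            simp only [hy']
            rw [Finset.sum_add_distrib, ← Finset.mul_sum]
          have h3 : ∑ i, e i = 0 := by
            have := hesum (fun _ => (1:ℝ))
            simpa using this
          rw [h2, h3]; ring
        have hcard' : (Finset.univ.filter (fun i => y' i ≠ 0)).card ≤ k := by
          have hsub : Finset.univ.filter (fun i => y' i ≠ 0) ⊆ supp.erase b := by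
            intro i hi
            have hi' : y' i ≠ 0 := (Finset.mem_filter.mp hi).2
            by_cases hib : i = b
            · subst hib; exact absurd hyb' hi'
            · refine Finset.mem_erase.mpr ⟨hib, ?_⟩
              by_cases hia : i = a
              · subst hia; exact ha
              · rw [hyother i hia hib] at hi'
                exact Finset.mem_filter.mpr ⟨Finset.mem_univ _, hi'⟩
          calc (Finset.univ.filter (fun i => y' i ≠ 0)).card ≤ (supp.erase b).card :=
                Finset.card_le_card hsub
            _ = supp.card - 1 := Finset.card_erase_of_mem hb
            _ ≤ k := by omega
        -- Q y ≤ Q y'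
        have hQ : ∑ i, ∑ j, w i j * y i * y j ≤ ∑ i, ∑ j, w i j * y' i * y' j := by
          -- inner expansion: for each i,
          -- ∑ j, w i j * y' i * y' j = y' i * d i + c * y' i * (w i a - w i b)
          have inner : ∀ i, ∑ j, w i j * y' i * y' j
              = y' i * d i + (c * y' i) * (w i a - w i b) := by
            intro i
            have hterm : ∀ j, w i j * y' i * y' j
                = y' i * (w i j * y j) + (c * y' i) * (w i j * e j) := by
              intro j
              have : y' j = y j + c * e j := rfl
              rw [this]; ring
            rw [Finset.sum_congr rfl fun j _ => hterm j, Finset.sum_add_distrib,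
              ← Finset.mul_sum, ← Finset.mul_sum]
            have hwe : ∑ j, w i j * e j = w i a - w i b := by
              rw [Finset.sum_congr rfl fun j _ => mul_comm (w i j) (e j)]
              exact hesum (fun j => w i j)
            rw [hwe, hdd]
          rw [Finset.sum_congr rfl fun i _ => inner i, Finset.sum_add_distrib]
          -- first piece
          have p1 : ∑ i, y' i * d i = (∑ i, y i * d i) + c * (d a - d b) := by
            have : ∀ i, y' i * d i = y i * d i + c * (e i * d i) := by
              intro i
              have : y' i = y i + c * e i := rfl
              rw [this]; ring
            rw [Finset.sum_congr rfl fun i _ => this i, Finset.sum_add_distrib,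
              ← Finset.mul_sum, hesum d]
          have p2 : ∑ i, (c * y' i) * (w i a - w i b) = c * (d a - d b) := by
            have hterm : ∀ i, (c * y' i) * (w i a - w i b)
                = c * (y i * (w i a - w i b)) + c^2 * (e i * (w i a - w i b)) := by
              intro i
              have : y' i = y i + c * e i := rfl
              rw [this]; ring
            rw [Finset.sum_congr rfl fun i _ => hterm i, Finset.sum_add_distrib,
              ← Finset.mul_sum, ← Finset.mul_sum, hesum (fun i => w i a - w i b)]
            have hz : (w a a - w a b) - (w b a - w b b) = 0 := by
              rw [hdiag, hdiag, hwab, hsym b a, hwab]; ring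
            rw [hz, mul_zero, add_zero]
            have : ∀ i, y i * (w i a - w i b) = y i * w i a - y i * w i b := by
              intro i; ring
            rw [Finset.sum_congr rfl fun i _ => this i, Finset.sum_sub_distrib]
            have hda : ∑ i, y i * w i a = d a := by
              rw [hdd]
              apply Finset.sum_congr rfl
              intro i _
              rw [hsym a i]; ring
            have hdb : ∑ i, y i * w i b = d b := by
              rw [hdd]
              apply Finset.sum_congr rfl
              intro i _
              rw [hsym b i]; ring
            rw [hda, hdb, mul_sub]
          have pQ : ∑ i, y i * d i = ∑ i, ∑ j, w i j * y i * y j := by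
            apply Finset.sum_congr rfl
            intro i _
            rw [hdd, Finset.mul_sum]
            apply Finset.sum_congr rfl
            intro j _; ring
          rw [p1, p2, pQ]
          have hcnn : 0 ≤ c := hy b
          have hdd' : 0 ≤ d a - d b := sub_nonneg.mpr hd
          nlinarith [mul_nonneg hcnn hdd']
        calc ∑ i, ∑ j, w i j * y i * y j ≤ ∑ i, ∑ j, w i j * y' i * y' j := hQ
          _ ≤ (1 - 1/r) * (∑ i, y' i)^2 := ih y' hy'nn hcard'
          _ = (1 - 1/r) * (∑ i, y i)^2 := by rw [hsum']
      have hwuv0 : w u v = 0 := le_antisymm hwuv (h0 u v)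
      rcases le_total (∑ j, w v j * y j) (∑ j, w u j * y j) with h | h
      · exact main u v hu hv huv hwuv0 h
      · exact main v u hv hu (Ne.symm huv) (by rw [hsym v u]; exact hwuv0) h

-- walk sign lemma
lemma walk_sign_sigma {n : ℕ} (B : Matrix (Fin n) (Fin n) ℝ) (σ : Fin n → ℝ)
    (hσ : ∀ i, σ i * σ i = 1) (S : Set (Fin n))
    (hB : ∀ i ∈ S, ∀ j ∈ S, i ≠ j → B i j = σ i * σ j) :
    ∀ {u v : Fin n} (w : (graphOf B).Walk u v), (∀ z ∈ w.support, z ∈ S) →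
      walkSign B w = σ u * σ v := by
  intro u v w
  induction w with
  | nil =>
    intro _
    simp only [walkSign, SimpleGraph.Walk.darts_nil, List.map_nil, List.prod_nil]
    exact (hσ _).symm
  | @cons u b v h p ih =>
    intro hs
    have hu : u ∈ S := hs u (by simp [SimpleGraph.Walk.support_cons])
    have hbS : b ∈ S := hs b (by
      simp only [SimpleGraph.Walk.support_cons, List.mem_cons]
      right
      exact p.start_mem_support)
    have hps : ∀ z ∈ p.support, z ∈ S := by
      intro z hz
      exact hs z (by simp [SimpleGraph.Walk.support_cons, hz])
    have hne : u ≠ b := h.ne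
    calc walkSign B (SimpleGraph.Walk.cons h p)
        = B u b * walkSign B p := by
          simp [walkSign, SimpleGraph.Walk.darts_cons]
      _ = (σ u * σ b) * (σ b * σ v) := by rw [hB u hu b hbS hne, ih hps]
      _ = σ u * σ v * (σ b * σ b) := by ring
      _ = σ u * σ v := by rw [hσ b, mul_one]


/-- If `n ≥ 2r`, `r ≥ 4`, `ρ(Γ) > n - 2` and `-Γ` has no balanced complete
subgraph on `r+1` vertices, then `ρ(Γ) = λ₁(Γ)`. -/
theorem stmt14 {n r : ℕ} (hr : 4 ≤ r) (hn : 2 * r ≤ n) (A : Matrix (Fin n) (Fin n) ℝ)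
    (hA : IsSignedAdj A)
    (hrho : (n : ℝ) - 2 < max (lam1 A) (lam1 (-A)))
    (hfree : ¬ ∃ S : Finset (Fin n), S.card = r + 1 ∧
      IsCompleteOn (-A) ↑S ∧ IsBalancedOn (-A) ↑S) :
    max (lam1 A) (lam1 (-A)) = lam1 A := by
  classical
  obtain ⟨hAsym, hAdiag, hAent⟩ := hA
  set B : Matrix (Fin n) (Fin n) ℝ := -A with hBdef
  have hBsym : ∀ i j, B i j = B j i := by
    intro i j; simp [hBdef, hAsym i j]
  have hBdiag : ∀ i, B i i = 0 := by
    intro i; simp [hBdef, hAdiag i]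
  have hBent : ∀ i j, B i j = 0 ∨ B i j = 1 ∨ B i j = -1 := by
    intro i j
    rcases hAent i j with h | h | h <;> simp [hBdef, h]
  have hBabs : ∀ i j, |B i j| ≤ 1 := by
    intro i j
    rcases hBent i j with h | h | h <;> rw [h] <;> norm_num
  -- key bound: every eigenvalue of B is at most n - 2
  have key : ∀ μ : ℝ, (∃ x : Fin n → ℝ, x ≠ 0 ∧ B.mulVec x = μ • x) → μ ≤ (n : ℝ) - 2 := by
    rintro μ ⟨x, hx0, hxe⟩
    set y : Fin n → ℝ := fun i => |x i| with hy
    set wgt : Fin n → Fin n → ℝ := fun i j => if 0 < B i j * x i * x j then 1 else 0 with hwgt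
    have hw0 : ∀ i j, 0 ≤ wgt i j := by
      intro i j; simp only [hwgt]; split <;> norm_num
    have hw1 : ∀ i j, wgt i j ≤ 1 := by
      intro i j; simp only [hwgt]; split <;> norm_num
    have hwsym : ∀ i j, wgt i j = wgt j i := by
      intro i j
      simp only [hwgt]
      have : B i j * x i * x j = B j i * x j * x i := by rw [hBsym i j]; ring
      rw [this]
    have hwdiag : ∀ i, wgt i i = 0 := by
      intro i
      simp only [hwgt, hBdiag i]
      norm_num
    -- clique bound from hfree
    have hclique : ∀ S : Finset (Fin n), (∀ i ∈ S, ∀ j ∈ S, i ≠ j → 0 < wgt i j) →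
        S.card ≤ r := by
      intro S hS
      by_contra hcard
      push_neg at hcard
      obtain ⟨S', hsub, hScard⟩ := Finset.exists_subset_card_eq (s := S) (n := r + 1) (by omega)
      have hS' : ∀ i ∈ S', ∀ j ∈ S', i ≠ j → 0 < B i j * x i * x j := by
        intro i hi j hj hij
        have := hS i (hsub hi) j (hsub hj) hij
        simp only [hwgt] at this
        by_contra hcon
        rw [if_neg hcon] at this
        exact lt_irrefl 0 this
      set σ : Fin n → ℝ := fun i => if x i < 0 then -1 else 1 with hσdef
      have hσ1 : ∀ i, σ i * σ i = 1 := by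
        intro i; simp only [hσdef]; split <;> norm_num
      have hBσ : ∀ i ∈ (S' : Set (Fin n)), ∀ j ∈ (S' : Set (Fin n)), i ≠ j →
          B i j = σ i * σ j := by
        intro i hi j hj hij
        have hp := hS' i (Finset.mem_coe.mp hi) j (Finset.mem_coe.mp hj) hij
        rcases hBent i j with h | h | h
        · rw [h] at hp; simp at hp
        · rw [h] at hp ⊢
          have hxx : 0 < x i * x j := by nlinarith
          rcases mul_pos_iff.mp hxx with ⟨h1, h2⟩ | ⟨h1, h2⟩
          · simp [hσdef, not_lt.mpr (le_of_lt h1), not_lt.mpr (le_of_lt h2)]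
          · simp [hσdef, h1, h2]
        · rw [h] at hp ⊢
          have hxx : x i * x j < 0 := by nlinarith
          rcases mul_neg_iff.mp hxx with ⟨h1, h2⟩ | ⟨h1, h2⟩
          · simp [hσdef, not_lt.mpr (le_of_lt h1), h2]
          · simp [hσdef, h1, not_lt.mpr (le_of_lt h2)]
      apply hfree
      refine ⟨S', hScard, ?_, ?_⟩
      · -- complete
        intro i hi j hj hij
        have hp := hS' i (Finset.mem_coe.mp hi) j (Finset.mem_coe.mp hj) hij
        intro h0
        rw [h0] at hp
        simp at hp
      · -- balanced
        intro u wk _hcyc hsupp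
        have := walk_sign_sigma B σ hσ1 (S' : Set (Fin n)) hBσ wk hsupp
        rw [show walkSign (-A) wk = walkSign B wk from rfl, this, hσ1 u]
    -- Rayleigh computation
    have hxsum : μ * ∑ i, (x i)^2 = ∑ i, ∑ j, B i j * x i * x j := by
      have h1 : ∀ i, x i * (B.mulVec x) i = μ * (x i)^2 := by
        intro i
        rw [hxe]
        simp [pow_two]
        ring
      have h2 : ∀ i, x i * (B.mulVec x) i = ∑ j, B i j * x i * x j := by
        intro i
        simp only [Matrix.mulVec, dotProduct]
        rw [Finset.mul_sum]
        apply Finset.sum_congr rfl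
        intro j _
        ring
      calc μ * ∑ i, (x i)^2 = ∑ i, μ * (x i)^2 := by rw [Finset.mul_sum]
        _ = ∑ i, x i * (B.mulVec x) i := by
            exact (Finset.sum_congr rfl fun i _ => (h1 i)).symm
        _ = ∑ i, ∑ j, B i j * x i * x j := Finset.sum_congr rfl fun i _ => h2 i
    have hterm : ∀ i j, B i j * x i * x j ≤ wgt i j * y i * y j := by
      intro i j
      simp only [hwgt]
      by_cases hp : 0 < B i j * x i * x j
      · rw [if_pos hp, one_mul]
        calc B i j * x i * x j ≤ |B i j * x i * x j| := le_abs_self _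
          _ = |B i j| * (|x i| * |x j|) := by rw [abs_mul, abs_mul]; ring
          _ ≤ 1 * (|x i| * |x j|) := by
              apply mul_le_mul_of_nonneg_right (hBabs i j)
              positivity
          _ = y i * y j := by simp [hy]
      · rw [if_neg hp, zero_mul, zero_mul]
        exact le_of_not_gt hp
    have hynn : ∀ i, 0 ≤ y i := fun i => abs_nonneg _
    have hrpos : 0 < r := by omega
    have hms := ms_lemma hrpos wgt hwsym hwdiag hw0 hw1 hclique y hynn
    have hCS : (∑ i, y i)^2 ≤ (n : ℝ) * ∑ i, (y i)^2 := by
      have hcs := Finset.sum_mul_sq_le_sq_mul_sq Finset.univ (fun _ => (1:ℝ)) y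
      simp only [one_mul, one_pow] at hcs
      calc (∑ i, y i)^2 ≤ (∑ _i : Fin n, (1:ℝ)) * ∑ i, (y i)^2 := hcs
        _ = (n : ℝ) * ∑ i, (y i)^2 := by simp
    have hy2x2 : ∑ i, (y i)^2 = ∑ i, (x i)^2 := by
      apply Finset.sum_congr rfl
      intro i _
      simp [hy, sq_abs]
    have hxpos : 0 < ∑ i, (x i)^2 := by
      have hex : ∃ i, x i ≠ 0 := by
        by_contra hc
        push_neg at hc
        exact hx0 (funext fun i => hc i)
      obtain ⟨i, hi⟩ := hex
      apply Finset.sum_pos' (fun j _ => sq_nonneg _)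
      exact ⟨i, Finset.mem_univ i, by positivity⟩
    have hfrac : (0:ℝ) ≤ 1 - 1/r := by
      have : (1:ℝ) ≤ r := by
        have : (4:ℝ) ≤ r := by exact_mod_cast hr
        linarith
      have hrR : (0:ℝ) < r := by positivity
      rw [sub_nonneg, div_le_one hrR]
      linarith
    have chain : μ * ∑ i, (x i)^2 ≤ (1 - 1/r) * (n:ℝ) * ∑ i, (x i)^2 := by
      calc μ * ∑ i, (x i)^2 = ∑ i, ∑ j, B i j * x i * x j := hxsum
        _ ≤ ∑ i, ∑ j, wgt i j * y i * y j :=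
            Finset.sum_le_sum fun i _ => Finset.sum_le_sum fun j _ => hterm i j
        _ ≤ (1 - 1/r) * (∑ i, y i)^2 := hms
        _ ≤ (1 - 1/r) * ((n:ℝ) * ∑ i, (y i)^2) := mul_le_mul_of_nonneg_left hCS hfrac
        _ = (1 - 1/r) * (n:ℝ) * ∑ i, (x i)^2 := by rw [hy2x2]; ring
    have hmu : μ ≤ (1 - 1/r) * (n:ℝ) := le_of_mul_le_mul_right
      (by calc μ * (∑ i, (x i)^2) ≤ _ := chain) hxpos
    -- (1 - 1/r) * n ≤ n - 2
    have hfin : (1 - 1/(r:ℝ)) * (n:ℝ) ≤ (n:ℝ) - 2 := by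
      have hrR : (0:ℝ) < r := by
        have : (4:ℝ) ≤ r := by exact_mod_cast hr
        linarith
      have hnr : 2 * (r:ℝ) ≤ (n:ℝ) := by exact_mod_cast hn
      have h2 : (2:ℝ) ≤ (n:ℝ) / r := by
        rw [le_div_iff₀ hrR]
        linarith
      have hexp : (1 - 1/(r:ℝ)) * (n:ℝ) = (n:ℝ) - (n:ℝ)/r := by
        field_simp
      rw [hexp]
      linarith
    linarith
  -- conclude
  have h2 : lam1 B ≤ (n : ℝ) - 2 := by
    apply Real.sSup_le
    · intro μ hμ
      exact key μ hμ
    · have : (8:ℝ) ≤ (n:ℝ) := by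
        have : 8 ≤ n := by omega
        exact_mod_cast this
      linarith
  rcases max_choice (lam1 A) (lam1 (-A)) with h | h
  · exact h
  · exfalso
    rw [h] at hrho
    have : lam1 (-A) ≤ (n:ℝ) - 2 := h2
    linarith
end

section
/- Two signed graphs on the same underlying graph are switching equivalent if and only if they have the same set of balanced cycles. -/
open Matrix BigOperators

section Aux

open SimpleGraph

variable {n : ℕ} {G : SimpleGraph (Fin n)}

lemma walkSign_nil {C : Matrix (Fin n) (Fin n) ℝ} {u : Fin n} :
    walkSign C (Walk.nil : G.Walk u u) = 1 := rfl

lemma walkSign_cons {C : Matrix (Fin n) (Fin n) ℝ} {u v x : Fin n} (h : G.Adj u v)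
    (p : G.Walk v x) : walkSign C (Walk.cons h p) = C u v * walkSign C p := by
  simp [walkSign]

lemma walkSign_append {C : Matrix (Fin n) (Fin n) ℝ} {u v x : Fin n}
    (p : G.Walk u v) (q : G.Walk v x) :
    walkSign C (p.append q) = walkSign C p * walkSign C q := by
  simp [walkSign, Walk.darts_append]

lemma walkSign_copy {C : Matrix (Fin n) (Fin n) ℝ} {u v u' v' : Fin n}
    (p : G.Walk u v) (hu : u = u') (hv : v = v') :
    walkSign C (p.copy hu hv) = walkSign C p := by
  subst hu; subst hv; rfl

lemma walkSign_reverse {C : Matrix (Fin n) (Fin n) ℝ} (hsym : ∀ i j, C i j = C j i)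
    {u v : Fin n} (p : G.Walk u v) : walkSign C p.reverse = walkSign C p := by
  unfold walkSign
  rw [Walk.darts_reverse, List.map_reverse, List.prod_reverse, List.map_map]
  congr 1
  apply List.map_congr_left
  intro d _
  exact hsym d.snd d.fst

lemma walkSign_pm {C : Matrix (Fin n) (Fin n) ℝ}
    (hpm : ∀ i j, G.Adj i j → C i j = 1 ∨ C i j = -1) {u v : Fin n} (p : G.Walk u v) :
    walkSign C p = 1 ∨ walkSign C p = -1 := by
  induction p with
  | nil => left; rfl
  | cons h p ih =>
    rw [walkSign_cons]
    rcases hpm _ _ h with h1 | h1 <;> rcases ih with h2 | h2 <;> rw [h1, h2] <;> norm_num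

/-- Harary's balance criterion, walk form: if every cycle has sign `1`,
then every closed walk has sign `1`. -/
lemma walkSign_closed_eq_one {C : Matrix (Fin n) (Fin n) ℝ}
    (hsym : ∀ i j, C i j = C j i)
    (hpm : ∀ i j, G.Adj i j → C i j = 1 ∨ C i j = -1)
    (hcyc : ∀ (u : Fin n) (w : G.Walk u u), w.IsCycle → walkSign C w = 1) :
    ∀ (u : Fin n) (w : G.Walk u u), walkSign C w = 1 := by
  classical
  suffices H : ∀ (N : ℕ) (u : Fin n) (w : G.Walk u u), w.length ≤ N → walkSign C w = 1 by
    exact fun u w => H w.length u w le_rfl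
  intro N
  induction N using Nat.strong_induction_on with
  | _ N ih =>
    intro u w hlen
    cases w with
    | nil => rfl
    | cons h p =>
      rename_i v
      by_cases hnd : p.support.Nodup
      · -- `p` is a path
        by_cases he : s(u, v) ∈ p.edges
        · -- then the walk is a doubled edge `u-v-u`
          cases p with
          | nil => simp at he
          | cons h2 p2 =>
            rename_i y
            by_cases hy : y = u
            · subst hy
              have hnil : p2 = Walk.nil := by
                rw [← Walk.isPath_iff_eq_nil]
                exact Walk.IsPath.mk' (by
                  rw [Walk.support_cons] at hnd
                  exact (List.nodup_cons.mp hnd).2)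
              subst hnil
              rw [walkSign_cons, walkSign_cons, walkSign_nil, mul_one, hsym v _]
              rcases hpm _ _ h with h1 | h1 <;> rw [h1] <;> norm_num
            · exfalso
              rw [Walk.edges_cons] at he
              rcases List.mem_cons.mp he with he1 | he2
              · rcases Sym2.eq_iff.mp he1 with ⟨h3, _⟩ | ⟨h3, _⟩
                · exact h.ne h3
                · exact hy h3.symm
              · have hv : v ∈ p2.support := Walk.snd_mem_support_of_mem_edges p2 he2
                rw [Walk.support_cons] at hnd
                exact (List.nodup_cons.mp hnd).1 hv
        · exact hcyc u (Walk.cons h p) ((Walk.cons_isCycle_iff p h).mpr ⟨Walk.IsPath.mk' hnd, he⟩)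
      · -- `p` has a repeated vertex `x`; rotate and split at `x`
        obtain ⟨x, hxdup⟩ := List.exists_duplicate_iff_not_nodup.mpr hnd
        have hcount : 2 ≤ p.support.count x := List.duplicate_iff_two_le_count.mp hxdup
        have hx : x ∈ (Walk.cons h p).support := by
          rw [Walk.support_cons]; exact List.mem_cons_of_mem _ hxdup.mem
        have hrot := (Walk.cons h p).rotate_darts x hx
        have hsign_rot : walkSign C ((Walk.cons h p).rotate x hx) = walkSign C (Walk.cons h p) := by
          unfold walkSign
          exact ((hrot.map _).perm).prod_eq
        have hlen_rot : ((Walk.cons h p).rotate x hx).length = (Walk.cons h p).length := by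
          rw [← Walk.length_darts, ← Walk.length_darts]
          exact hrot.perm.length_eq
        have hcount_rot : 2 ≤ (((Walk.cons h p).rotate x hx).support.tail).count x := by
          rw [((Walk.cons h p).support_rotate x hx).perm.count_eq]
          simpa [Walk.support_cons] using hcount
        cases hW' : (Walk.cons h p).rotate x hx with
        | nil =>
          exfalso
          rw [hW'] at hlen_rot
          simp [Walk.length_cons] at hlen_rot
        | cons h' p' =>
          rename_i y'
          rw [hW'] at hsign_rot hlen_rot hcount_rot
          rw [Walk.support_cons] at hcount_rot
          simp only [List.tail_cons] at hcount_rot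
          have hx'' : x ∈ p'.support := p'.end_mem_support
          have hspec := p'.take_spec hx''
          have hq1 : ((p'.takeUntil x hx'').support).count x = 1 :=
            p'.count_support_takeUntil_eq_one hx''
          have hsupp_split : p'.support =
              (p'.takeUntil x hx'').support ++ (p'.dropUntil x hx'').support.tail := by
            conv_lhs => rw [← hspec]
            rw [Walk.support_append]
          have hcount_r : 1 ≤ ((p'.dropUntil x hx'').support.tail).count x := by
            rw [hsupp_split, List.count_append, hq1] at hcount_rot
            omega
          have hrlen : 1 ≤ (p'.dropUntil x hx'').length := by
            have h1 := List.count_le_length (a := x) (l := (p'.dropUntil x hx'').support.tail)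
            have h2 : ((p'.dropUntil x hx'').support.tail).length
                = (p'.dropUntil x hx'').length := by
              rw [List.length_tail, Walk.length_support]
              omega
            omega
          have hplen : p'.length
              = (p'.takeUntil x hx'').length + (p'.dropUntil x hx'').length := by
            conv_lhs => rw [← hspec]
            rw [Walk.length_append]
          have hlen' : p'.length + 1 ≤ N := by
            simp only [Walk.length_cons] at hlen_rot hlen
            omega
          have hsq : walkSign C (Walk.cons h' (p'.takeUntil x hx'')) = 1 := by
            refine ih ((p'.takeUntil x hx'').length + 1) (by omega) x _ ?_
            rw [Walk.length_cons]
          have hsr : walkSign C (p'.dropUntil x hx'') = 1 :=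
            ih ((p'.dropUntil x hx'').length) (by omega) x _ le_rfl
          rw [walkSign_cons] at hsq
          rw [← hsign_rot, walkSign_cons]
          conv_lhs => rw [← hspec]
          rw [walkSign_append, ← mul_assoc, hsq, hsr, one_mul]

end Aux

/-- Two signed graphs on the same underlying graph are switching equivalent iff
they have the same set of balanced cycles. -/
theorem stmt19 {n : ℕ} (A B : Matrix (Fin n) (Fin n) ℝ)
    (hA : IsSignedAdj A) (hB : IsSignedAdj B)
    (hsupp : ∀ i j, A i j = 0 ↔ B i j = 0) :
    (∃ s : Fin n → ℝ, (∀ i, s i = 1 ∨ s i = -1) ∧ ∀ i j, B i j = s i * A i j * s j) ↔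
    (∀ (u : Fin n) (w : (graphOf A).Walk u u), w.IsCycle →
      (walkSign A w = 1 ↔ walkSign B w = 1)) := by
  classical
  constructor
  · rintro ⟨s, hs1, hs2⟩ u w _
    have hss : ∀ i, s i * s i = 1 := by
      intro i; rcases hs1 i with h | h <;> rw [h] <;> norm_num
    have key : ∀ {a b : Fin n} (p : (graphOf A).Walk a b),
        walkSign B p = s a * walkSign A p * s b := by
      intro a b p
      induction p with
      | nil =>
        rw [walkSign_nil, walkSign_nil, mul_one]
        exact (hss _).symm
      | cons h p ih =>
        rename_i u' v' w'
        rw [walkSign_cons, walkSign_cons, ih, hs2]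
        linear_combination (s u' * A u' v' * walkSign A p * s w') * hss v' 
    rw [key w]
    rw [show s u * walkSign A w * s u = walkSign A w by
      linear_combination walkSign A w * hss u]
  · intro hcycB
    set G := graphOf A with hG
    set C : Matrix (Fin n) (Fin n) ℝ := Matrix.of (fun i j => A i j * B i j) with hC
    have hCapp : ∀ i j, C i j = A i j * B i j := fun i j => rfl
    have hCsym : ∀ i j, C i j = C j i := by
      intro i j; rw [hCapp, hCapp, hA.1 i j, hB.1 i j]
    have hApm : ∀ i j, G.Adj i j → A i j = 1 ∨ A i j = -1 := fun i j hij =>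
      (hA.2.2 i j).resolve_left hij.2.1
    have hBpm : ∀ i j, G.Adj i j → B i j = 1 ∨ B i j = -1 := fun i j hij =>
      (hB.2.2 i j).resolve_left (fun h0 => hij.2.1 ((hsupp i j).mpr h0))
    have hCpm : ∀ i j, G.Adj i j → C i j = 1 ∨ C i j = -1 := by
      intro i j hij
      rw [hCapp]
      rcases hApm i j hij with h1 | h1 <;> rcases hBpm i j hij with h2 | h2 <;>
        rw [h1, h2] <;> norm_num
    have hCAB : ∀ (a b : Fin n) (p : G.Walk a b),
        walkSign C p = walkSign A p * walkSign B p := by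
      intro a b p
      show (p.darts.map fun d => A d.fst d.snd * B d.fst d.snd).prod = _
      rw [List.prod_map_mul]
      rfl
    have hcycC : ∀ (u : Fin n) (w : G.Walk u u), w.IsCycle → walkSign C w = 1 := by
      intro u w hw
      have hiff := hcycB u w hw
      have hA1 := walkSign_pm hApm w
      have hB1 := walkSign_pm hBpm w
      rw [hCAB]
      rcases hA1 with h1 | h1 <;> rcases hB1 with h2 | h2 <;> rw [h1, h2] <;> norm_num
      · rw [h1, h2] at hiff; norm_num at hiff
      · rw [h1, h2] at hiff; norm_num at hiff
    have hbal := walkSign_closed_eq_one hCsym hCpm hcycC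
    have hreach : ∀ i : Fin n, G.Reachable (Quot.out (G.connectedComponentMk i)) i :=
      fun i => SimpleGraph.ConnectedComponent.eq.mp (Quot.out_eq _)
    set pw : ∀ i : Fin n, G.Walk (Quot.out (G.connectedComponentMk i)) i :=
      fun i => (hreach i).some with hpw
    refine ⟨fun i => walkSign C (pw i), fun i => walkSign_pm hCpm (pw i), ?_⟩
    intro i j
    show B i j = walkSign C (pw i) * A i j * walkSign C (pw j)
    by_cases hij0 : A i j = 0
    · rw [(hsupp i j).mp hij0, hij0]; ring
    · have hne : i ≠ j := by
        intro hh; exact hij0 (hh ▸ hA.2.1 i)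
      have hAdj : G.Adj i j :=
        ⟨hne, hij0, fun hh => hij0 ((hA.1 i j).trans hh)⟩
      have hcc : G.connectedComponentMk i = G.connectedComponentMk j :=
        SimpleGraph.ConnectedComponent.eq.mpr hAdj.reachable
      have hroot : Quot.out (G.connectedComponentMk j)
          = Quot.out (G.connectedComponentMk i) := by rw [hcc]
      have h1 : walkSign C
          (((pw i).append (SimpleGraph.Walk.cons hAdj (pw j).reverse)).copy rfl hroot) = 1 :=
        hbal _ _
      rw [walkSign_copy, walkSign_append, walkSign_cons, walkSign_reverse hCsym] at h1
      rw [hCapp] at h1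
      rcases walkSign_pm hCpm (pw i) with h3 | h3 <;>
        rcases walkSign_pm hCpm (pw j) with h4 | h4 <;>
        rcases hApm i j hAdj with h5 | h5 <;>
        rcases hBpm i j hAdj with h6 | h6 <;>
        rw [h3, h4, h5, h6] at h1 ⊢ <;>
        norm_num at h1 <;> norm_num
end
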